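/- In G_n, the unique player 0 strategy σ for which the play from every starting node a_i under σ and any optimal player 1 response passes through d_{n+1} is given by σ(a_i)=a_{i+1} for i<n and σ(a_n)=d_{n+1}; it differs from the initial strategy σ_0 in exactly one edge. -/

import Mathlib

structure PGame (V : Type) where
  E : V → V → Prop
  isP0 : V → Bool
  p : V → ℤ

namespace PGame

variable {V : Type}

/-- A valid positional strategy for player 0: at every player-0 node it follows an edge. -/
def Strat0Valid (G : PGame V) (σ : V → V) : Prop := ∀ v, G.isP0 v = true → G.E v (σ v)

/-- A valid positional strategy for player 1. -/
def Strat1Valid (G : PGame V) (τ : V → V) : Prop := ∀ v, G.isP0 v = false → G.E v (τ v)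

/-- Edges of the subgraph where player 0 follows `σ` (player 1 keeps all edges). -/
def E0 (G : PGame V) (σ : V → V) (v w : V) : Prop :=
  if G.isP0 v then w = σ v else G.E v w

/-- Edges of the subgraph where player 1 follows `τ` (player 0 keeps all edges). -/
def E1 (G : PGame V) (τ : V → V) (v w : V) : Prop :=
  if G.isP0 v then G.E v w else w = τ v

/-- A cycle of length `k` (given by a `k`-periodic sequence) in the relation `R`. -/
def IsCycle (R : V → V → Prop) (k : ℕ) (c : ℕ → V) : Prop :=
  0 < k ∧ (∀ i, R (c i) (c (i + 1))) ∧ ∀ i, c (i + k) = c i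

/-- The highest priority occurring on the (periodic) cycle `c` is even. -/
def TopEven (G : PGame V) (c : ℕ → V) : Prop :=
  ∃ i, Even (G.p (c i)) ∧ ∀ j, G.p (c j) ≤ G.p (c i)

/-- The highest priority occurring on the (periodic) cycle `c` is odd. -/
def TopOdd (G : PGame V) (c : ℕ → V) : Prop :=
  ∃ i, Odd (G.p (c i)) ∧ ∀ j, G.p (c j) ≤ G.p (c i)

/-- `σ` is an admissible player 0 strategy: valid, and every cycle avoiding the sink
in the subgraph where player 0 follows `σ` has even highest priority. -/
def Admissible0 (G : PGame V) (top : V) (σ : V → V) : Prop :=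
  G.Strat0Valid σ ∧ ∀ k c, IsCycle (G.E0 σ) k c → (∀ i, c i ≠ top) → G.TopEven c

/-- `τ` is an admissible player 1 strategy. -/
def Admissible1 (G : PGame V) (top : V) (τ : V → V) : Prop :=
  G.Strat1Valid τ ∧ ∀ k c, IsCycle (G.E1 τ) k c → (∀ i, c i ≠ top) → G.TopOdd c

/-- `top` is a sink node: unique smallest priority and only the self-loop as outgoing edge. -/
def IsSink (G : PGame V) (top : V) : Prop :=
  (∀ v, v ≠ top → G.p top < G.p v) ∧ (∀ w, G.E top w ↔ w = top)

/-- A sink parity game. -/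
def IsSinkGame (G : PGame V) (top : V) : Prop :=
  G.IsSink top ∧ (∃ σ, G.Admissible0 top σ) ∧ (∃ τ, G.Admissible1 top τ)

/-- One move when both players play their positional strategies. -/
def step (G : PGame V) (σ τ : V → V) (v : V) : V := if G.isP0 v then σ v else τ v

/-- The play from `v` under the strategies `σ`, `τ`. -/
def play (G : PGame V) (σ τ : V → V) (v : V) (n : ℕ) : V := (G.step σ τ)^[n] v

end PGame
/-- Play values: `-∞`, a nonnegative integer vector indexed by priorities, or `∞`. -/
inductive EV : Type where
  | neg : EV
  | fin : (ℤ → ℕ) → EV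
  | pos : EV

/-- The strict comparison `B ◁ C` on vectors: at the largest priority `q` where they differ,
either `q` is even and `B q < C q`, or `q` is odd and `B q > C q`. -/
def vlt (B C : ℤ → ℕ) : Prop :=
  ∃ q : ℤ, B q ≠ C q ∧ (∀ r : ℤ, q < r → B r = C r) ∧
    ((Even q ∧ B q < C q) ∨ (Odd q ∧ C q < B q))

/-- The strict order `◁` extended with `-∞` as least and `∞` as greatest element. -/
def elt : EV → EV → Prop
  | EV.neg, EV.neg => False
  | EV.neg, _ => True
  | EV.fin B, EV.fin C => vlt B C
  | EV.fin _, EV.pos => True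
  | _, _ => False

/-- The non-strict order `⊴`. -/
def ele (x y : EV) : Prop := elt x y ∨ x = y

/-- Priority `q` is seen infinitely often along the play from `v`. -/
def InfOft {V : Type} (G : PGame V) (σ τ : V → V) (v : V) (q : ℤ) : Prop :=
  ∀ n, ∃ m, n ≤ m ∧ G.p (G.play σ τ v m) = q

open Classical in
/-- The play value `Θ_{σ,τ}(v)`: if the play reaches the sink `top`, the vector counting
for each priority how often it occurs before reaching `top`; otherwise `∞` or `-∞`
according to the parity of the highest priority seen infinitely often. -/
noncomputable def theta {V : Type} (G : PGame V) (top : V) (σ τ : V → V) (v : V) : EV :=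
  if h : ∃ n, G.play σ τ v n = top then
    EV.fin (fun q => ((Finset.range (Nat.find h)).filter
      (fun j => G.p (G.play σ τ v j) = q)).card)
  else if ∃ q, InfOft G σ τ v q ∧ Even q ∧ ∀ q', InfOft G σ τ v q' → q' ≤ q
    then EV.pos else EV.neg

/-- `τbar` is an optimal counterstrategy of player 1 against `σ`: it minimizes `Θ_{σ,·}`
pointwise with respect to `⊴`. The valuation is `Ξ_σ = Θ_{σ,τbar}`. -/
def OptCounter1 {V : Type} (G : PGame V) (top : V) (σ τbar : V → V) : Prop :=
  G.Strat1Valid τbar ∧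
    ∀ τ, G.Strat1Valid τ → ∀ v, ele (theta G top σ τbar v) (theta G top σ τ v)

/-- `σbar` is an optimal counterstrategy of player 0 against `τ`: it maximizes `Θ_{·,τ}`
pointwise with respect to `⊴`. The valuation is `Ξ_τ = Θ_{σbar,τ}`. -/
def OptCounter0 {V : Type} (G : PGame V) (top : V) (τ σbar : V → V) : Prop :=
  G.Strat0Valid σbar ∧
    ∀ σ, G.Strat0Valid σ → ∀ v, ele (theta G top σ τ v) (theta G top σbar τ v)
/-- Nodes of the game `G_n`: `(true, i)` is `a_i`, `(false, i)` is `d_i` (for `1 ≤ i ≤ n+1`);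
other indices are junk nodes that just move to the sink `a_{n+1}`. -/
abbrev VN : Type := Bool × ℕ

/-- Priorities of `G_n`: `p(a_i) = 2i+1` for `i ≤ n`, `p(a_{n+1}) = 1`,
`p(d_i) = 2i+2` (so `p(d_{n+1}) = 2n+4`). -/
def pN (n : ℕ) : VN → ℤ
  | (true, i) => if 1 ≤ i ∧ i ≤ n then 2 * (i : ℤ) + 1 else 1
  | (false, i) => if 1 ≤ i ∧ i ≤ n + 1 then 2 * (i : ℤ) + 2 else 1

/-- Edges of `G_n`: `a_1 → a_2, d_2`; `a_i → a_1, a_{i+1}, d_{i+1}` for `2 ≤ i ≤ n`;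
`a_{n+1} → a_{n+1}` (sink); `d_1 → a_2, d_2`; `d_i → d_1, a_{i+1}, d_{i+1}` for `2 ≤ i ≤ n`;
`d_{n+1} → a_{n+1}`. -/
def EN (n : ℕ) : VN → VN → Prop
  | (true, i), w =>
      if i = n + 1 then w = (true, n + 1)
      else if i = 1 then w = (true, 2) ∨ w = (false, 2)
      else if 2 ≤ i ∧ i ≤ n then w = (true, 1) ∨ w = (true, i + 1) ∨ w = (false, i + 1)
      else w = (true, n + 1)
  | (false, i), w =>
      if i = n + 1 then w = (true, n + 1)
      else if i = 1 then w = (true, 2) ∨ w = (false, 2)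
      else if 2 ≤ i ∧ i ≤ n then w = (false, 1) ∨ w = (true, i + 1) ∨ w = (false, i + 1)
      else w = (true, n + 1)

/-- The game `G_n`: `a`-nodes belong to player 0, `d`-nodes to player 1. -/
def GameN (n : ℕ) : PGame VN := ⟨EN n, Prod.fst, pN n⟩

/-- The initial player 0 strategy: `σ₀(a_i) = a_{i+1}` for `i ≤ n`, `σ₀(a_{n+1}) = a_{n+1}`. -/
def sigma0 (n : ℕ) : VN → VN
  | (true, i) => if 1 ≤ i ∧ i ≤ n then (true, i + 1) else (true, n + 1)
  | (false, _) => (true, n + 1)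

/-- The initial player 1 strategy: `τ₀(d_i) = d_{i+1}` for `i ≤ n`, `τ₀(d_{n+1}) = a_{n+1}`. -/
def tau0 (n : ℕ) : VN → VN
  | (false, i) => if 1 ≤ i ∧ i ≤ n then (false, i + 1) else (true, n + 1)
  | (true, _) => (true, n + 1)

/-- The optimal player 0 strategy of `G_n`: `σ*(a_i) = a_{i+1}` for `i < n` and
`σ*(a_n) = d_{n+1}`. -/
def sigmaStar (n : ℕ) : VN → VN
  | (true, i) =>
      if 1 ≤ i ∧ i < n then (true, i + 1)
      else if i = n then (false, n + 1)
      else (true, n + 1)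
  | (false, _) => (true, n + 1)
section OrderLemmas

open EV

lemma vlt_trans {B C D : ℤ → ℕ} (h1 : vlt B C) (h2 : vlt C D) : vlt B D := by
  obtain ⟨q1, hne1, hab1, hc1⟩ := h1
  obtain ⟨q2, hne2, hab2, hc2⟩ := h2
  rcases lt_trichotomy q1 q2 with h | h | h
  · refine ⟨q2, ?_, ?_, ?_⟩
    · rw [hab1 q2 h]; exact hne2
    · intro r hr; rw [hab1 r (h.trans hr), hab2 r hr]
    · rcases hc2 with ⟨he, hlt⟩ | ⟨ho, hlt⟩
      · exact Or.inl ⟨he, by rw [hab1 q2 h]; exact hlt⟩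
      · exact Or.inr ⟨ho, by rw [hab1 q2 h]; exact hlt⟩
  · subst h
    rcases hc1 with ⟨he, hlt1⟩ | ⟨ho, hlt1⟩
    · rcases hc2 with ⟨_, hlt2⟩ | ⟨ho2, _⟩
      · exact ⟨q1, (hlt1.trans hlt2).ne, fun r hr => (hab1 r hr).trans (hab2 r hr),
          Or.inl ⟨he, hlt1.trans hlt2⟩⟩
      · exact absurd ho2 (Int.not_odd_iff_even.mpr he)
    · rcases hc2 with ⟨he2, _⟩ | ⟨_, hlt2⟩
      · exact absurd ho (Int.not_odd_iff_even.mpr he2)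
      · exact ⟨q1, (hlt2.trans hlt1).ne', fun r hr => (hab1 r hr).trans (hab2 r hr),
          Or.inr ⟨ho, hlt2.trans hlt1⟩⟩
  · refine ⟨q1, ?_, ?_, ?_⟩
    · rw [← hab2 q1 h]; exact hne1
    · intro r hr; rw [hab1 r hr, hab2 r (h.trans hr)]
    · rcases hc1 with ⟨he, hlt⟩ | ⟨ho, hlt⟩
      · exact Or.inl ⟨he, by rw [← hab2 q1 h]; exact hlt⟩
      · exact Or.inr ⟨ho, by rw [← hab2 q1 h]; exact hlt⟩

lemma elt_trans {x y z : EV} (h1 : elt x y) (h2 : elt y z) : elt x z := by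
  cases x <;> cases y <;> cases z <;> simp [elt] at * <;> try exact h1
  exact vlt_trans h1 h2

lemma ele_refl (x : EV) : ele x x := Or.inr rfl

lemma ele_trans {x y z : EV} (h1 : ele x y) (h2 : ele y z) : ele x z := by
  rcases h1 with h1 | rfl
  · rcases h2 with h2 | rfl
    · exact Or.inl (elt_trans h1 h2)
    · exact Or.inl h1
  · exact h2

lemma ele_pos (x : EV) : ele x pos := by
  cases x
  · exact Or.inl trivial
  · exact Or.inl trivial
  · exact Or.inr rfl

lemma neg_ele (x : EV) : ele neg x := by
  cases x
  · exact Or.inr rfl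
  · exact Or.inl trivial
  · exact Or.inl trivial

lemma ele_neg_iff {x : EV} : ele x neg ↔ x = neg := by
  constructor
  · rintro (h | rfl)
    · cases x <;> simp [elt] at h ⊢
    · rfl
  · rintro rfl; exact Or.inr rfl

lemma pos_ele_iff {x : EV} : ele pos x ↔ x = pos := by
  constructor
  · rintro (h | h)
    · cases x <;> simp [elt] at h ⊢
    · exact h.symm
  · rintro rfl; exact Or.inr rfl

lemma vlt_add_left (A : ℤ → ℕ) {B C : ℤ → ℕ} (h : vlt B C) :
    vlt (fun q => A q + B q) (fun q => A q + C q) := by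
  obtain ⟨q, hne, hab, hc⟩ := h
  refine ⟨q, by simp only []; omega, fun r hr => by simp only [hab r hr], ?_⟩
  rcases hc with ⟨he, hlt⟩ | ⟨ho, hlt⟩
  · exact Or.inl ⟨he, by simp only []; omega⟩
  · exact Or.inr ⟨ho, by simp only []; omega⟩

/-- Add a count vector to an extended value. -/
def oplus (A : ℤ → ℕ) : EV → EV
  | EV.fin B => EV.fin (fun q => A q + B q)
  | EV.pos => EV.pos
  | EV.neg => EV.neg

lemma oplus_mono (A : ℤ → ℕ) {x y : EV} (h : ele x y) : ele (oplus A x) (oplus A y) := by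
  rcases h with h | rfl
  · cases x <;> cases y
    · simp [elt] at h
    · exact Or.inl trivial
    · exact Or.inl trivial
    · simp [elt] at h
    · exact Or.inl (vlt_add_left A h)
    · exact Or.inl trivial
    · simp [elt] at h
    · simp [elt] at h
    · simp [elt] at h
  · exact ele_refl _

lemma oplus_oplus (A B : ℤ → ℕ) (x : EV) :
    oplus A (oplus B x) = oplus (fun q => A q + B q) x := by
  cases x <;> simp [oplus]
  funext q; omega

lemma oplus_zero (x : EV) : oplus (fun _ => 0) x = x := by
  cases x <;> simp [oplus]

lemma oplus_eq_neg_iff (A : ℤ → ℕ) (x : EV) : oplus A x = EV.neg ↔ x = EV.neg := by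
  cases x <;> simp [oplus]

lemma oplus_eq_pos_iff (A : ℤ → ℕ) (x : EV) : oplus A x = EV.pos ↔ x = EV.pos := by
  cases x <;> simp [oplus]

lemma not_ele_of_gt_even {C C' : ℤ → ℕ} {q₀ : ℤ} (heven : Even q₀) (hlt : C' q₀ < C q₀)
    (habove : ∀ q, q₀ < q → C q = C' q) : ¬ ele (EV.fin C) (EV.fin C') := by
  rintro (h | h)
  · obtain ⟨q, hne, hab, hc⟩ := h
    rcases lt_trichotomy q q₀ with hq | rfl | hq
    · have := hab q₀ hq; omega
    · rcases hc with ⟨_, h2⟩ | ⟨ho, _⟩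
      · omega
      · exact (Int.not_odd_iff_even.mpr heven) ho
    · exact hne (habove q hq)
  · injection h with hCC
    have := congrFun hCC q₀
    omega

lemma fin_total {N : ℤ} {B C : ℤ → ℕ} (hB : ∀ q, q ∉ Finset.Icc 1 N → B q = 0)
    (hC : ∀ q, q ∉ Finset.Icc 1 N → C q = 0) :
    ele (EV.fin B) (EV.fin C) ∨ ele (EV.fin C) (EV.fin B) := by
  classical
  by_cases hbc : B = C
  · exact Or.inl (Or.inr (by rw [hbc]))
  · obtain ⟨q1, hq1⟩ : ∃ q, B q ≠ C q := by
      by_contra h; push_neg at h; exact hbc (funext h)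
    set s := (Finset.Icc 1 N).filter (fun q => B q ≠ C q) with hs
    have hq1s : q1 ∈ s := by
      refine Finset.mem_filter.mpr ⟨?_, hq1⟩
      by_contra h; rw [hB q1 h, hC q1 h] at hq1; exact hq1 rfl
    have hne : s.Nonempty := ⟨q1, hq1s⟩
    set q := s.max' hne with hq
    have hqs : q ∈ s := s.max'_mem hne
    have hdiff : B q ≠ C q := (Finset.mem_filter.mp hqs).2
    have habove : ∀ r, q < r → B r = C r := by
      intro r hr
      by_contra hne'
      have hrs : r ∈ s := by
        refine Finset.mem_filter.mpr ⟨?_, hne'⟩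
        by_contra h; rw [hB r h, hC r h] at hne'; exact hne' rfl
      exact absurd (s.le_max' r hrs) (not_le.mpr hr)
    rcases Int.even_or_odd q with he | ho
    · rcases lt_or_gt_of_ne hdiff with h | h
      · exact Or.inl (Or.inl ⟨q, hdiff, habove, Or.inl ⟨he, h⟩⟩)
      · exact Or.inr (Or.inl ⟨q, hdiff.symm, fun r hr => (habove r hr).symm, Or.inl ⟨he, h⟩⟩)
    · rcases lt_or_gt_of_ne hdiff with h | h
      · exact Or.inr (Or.inl ⟨q, hdiff.symm, fun r hr => (habove r hr).symm,
          Or.inr ⟨Int.not_even_iff_odd.mp (Int.not_even_iff_odd.mpr ho), h⟩⟩)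
      · exact Or.inl (Or.inl ⟨q, hdiff, habove, Or.inr ⟨ho, h⟩⟩)

end OrderLemmas
section ThetaLemmas

variable {V : Type} (G : PGame V) (top : V) (σ τ τ' : V → V)

/-- Indicator count vector of a single priority. -/
def sgl (q : ℤ) : ℤ → ℕ := fun r => if q = r then 1 else 0

lemma play_zero (v : V) : G.play σ τ v 0 = v := rfl

lemma play_succ (v : V) (m : ℕ) : G.play σ τ v (m+1) = G.play σ τ (G.step σ τ v) m := by
  simp [PGame.play, Function.iterate_succ_apply]

lemma play_succ' (v : V) (m : ℕ) : G.play σ τ v (m+1) = G.step σ τ (G.play σ τ v m) := by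
  simp [PGame.play, Function.iterate_succ_apply']

lemma play_add (v : V) (a b : ℕ) : G.play σ τ v (b+a) = G.play σ τ (G.play σ τ v a) b := by
  simp [PGame.play, Function.iterate_add_apply]

lemma play_top_fix (habs : G.step σ τ top = top) (m : ℕ) : G.play σ τ top m = top := by
  induction m with
  | zero => rfl
  | succ k ih => rw [play_succ', ih, habs]

lemma theta_step {v : V} (hv : v ≠ top) :
    theta G top σ τ v = oplus (sgl (G.p v)) (theta G top σ τ (G.step σ τ v)) := by
  classical
  set w := G.step σ τ v with hw
  have hp : ∀ m, G.play σ τ v (m+1) = G.play σ τ w m := fun m => play_succ G σ τ v m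
  by_cases h : ∃ m, G.play σ τ v m = top
  · have hwr : ∃ m, G.play σ τ w m = top := by
      obtain ⟨m, hm⟩ := h
      cases m with
      | zero => exact absurd hm hv
      | succ k => exact ⟨k, by rw [← hp]; exact hm⟩
    rw [theta, dif_pos h, theta, dif_pos hwr]
    have h0 : Nat.find h ≠ 0 := by
      intro h0
      exact hv (by have := Nat.find_spec h; rwa [h0] at this)
    obtain ⟨k, hk⟩ := Nat.exists_eq_succ_of_ne_zero h0
    have hks : G.play σ τ w k = top := by
      have hsp := Nat.find_spec h
      rw [hk] at hsp
      rw [← hp]; exact hsp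
    have hfind : Nat.find h = Nat.find hwr + 1 := by
      have h1 : Nat.find hwr ≤ k := Nat.find_le hks
      have h2 : Nat.find h ≤ Nat.find hwr + 1 :=
        Nat.find_le (by rw [hp]; exact Nat.find_spec hwr)
      omega
    rw [hfind]
    show EV.fin _ = EV.fin _
    congr 1
    funext q
    show (Finset.filter (fun j => G.p (G.play σ τ v j) = q) (Finset.range (Nat.find hwr + 1))).card
        = sgl (G.p v) q + (Finset.filter (fun j => G.p (G.play σ τ w j) = q) (Finset.range (Nat.find hwr))).card
    rw [Finset.card_filter, Finset.card_filter, Finset.sum_range_succ']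
    rw [Finset.sum_congr rfl (fun i _ => by rw [hp i])]
    simp only [sgl, play_zero]
    rw [Nat.add_comm]
    congr
  · have hwr : ¬ ∃ m, G.play σ τ w m = top := by
      rintro ⟨m, hm⟩; exact h ⟨m+1, by rw [hp]; exact hm⟩
    rw [theta, dif_neg h, theta, dif_neg hwr]
    have hio : ∀ q, InfOft G σ τ v q ↔ InfOft G σ τ w q := by
      intro q
      constructor
      · intro hq N
        obtain ⟨m, hm1, hm2⟩ := hq (N+1)
        obtain ⟨m', rfl⟩ : ∃ m', m = m'+1 := ⟨m-1, by omega⟩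
        exact ⟨m', by omega, by rw [← hp]; exact hm2⟩
      · intro hq N
        obtain ⟨m, hm1, hm2⟩ := hq N
        exact ⟨m+1, by omega, by rw [hp]; exact hm2⟩
    have hcond : (∃ q, InfOft G σ τ v q ∧ Even q ∧ ∀ q', InfOft G σ τ v q' → q' ≤ q) ↔
        (∃ q, InfOft G σ τ w q ∧ Even q ∧ ∀ q', InfOft G σ τ w q' → q' ≤ q) := by
      constructor
      · rintro ⟨q, h1, h2, h3⟩
        exact ⟨q, (hio q).mp h1, h2, fun q' hq' => h3 q' ((hio q').mpr hq')⟩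
      · rintro ⟨q, h1, h2, h3⟩
        exact ⟨q, (hio q).mpr h1, h2, fun q' hq' => h3 q' ((hio q').mp hq')⟩
    rw [if_congr hcond rfl rfl]
    split_ifs <;> rfl

lemma theta_top : theta G top σ τ top = EV.fin (fun _ => 0) := by
  classical
  have h : ∃ m, G.play σ τ top m = top := ⟨0, rfl⟩
  rw [theta, dif_pos h]
  have h0 : Nat.find h = 0 := (Nat.find_eq_zero h).mpr rfl
  rw [h0]
  simp

lemma theta_neg_of (habs : G.step σ τ top = top) {v : V} (s : ℕ)
    (h : theta G top σ τ (G.play σ τ v s) = EV.neg) : theta G top σ τ v = EV.neg := by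
  induction s generalizing v with
  | zero => exact h
  | succ k ih =>
    have hv : v ≠ top := by
      intro hvt
      rw [hvt, play_top_fix G top σ τ habs, theta_top] at h
      exact EV.noConfusion h
    rw [theta_step G top σ τ hv, ih (by rw [← play_succ]; exact h)]
    rfl

lemma play_agree {v : V} (h : ∀ m, G.step σ τ' (G.play σ τ v m) = G.step σ τ (G.play σ τ v m)) :
    ∀ m, G.play σ τ' v m = G.play σ τ v m := by
  intro m
  induction m with
  | zero => rfl
  | succ k ih => rw [play_succ', play_succ', ih, h k]

lemma theta_congr {v : V} (h : ∀ m, G.play σ τ v m = G.play σ τ' v m) :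
    theta G top σ τ v = theta G top σ τ' v := by
  have hh : G.play σ τ v = G.play σ τ' v := funext h
  unfold theta InfOft
  rw [hh]

end ThetaLemmas
section GameBasic

lemma stepA (n : ℕ) (σ τ : VN → VN) (i : ℕ) :
    (GameN n).step σ τ (true, i) = σ (true, i) := by
  simp [PGame.step, GameN]

lemma stepD (n : ℕ) (σ τ : VN → VN) (i : ℕ) :
    (GameN n).step σ τ (false, i) = τ (false, i) := by
  simp [PGame.step, GameN]

lemma EN_snd {n : ℕ} {v w : VN} (h : EN n v w) : w.2 ≤ n + 1 := by
  obtain ⟨b, i⟩ := v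
  cases b <;> simp only [EN] at h <;> split_ifs at h with h1 h2 h3 <;>
    rcases h with rfl | rfl | rfl <;> simp <;> omega

lemma sigma_forced {n : ℕ} {σ : VN → VN} (hσ : (GameN n).Strat0Valid σ) (hn : 1 ≤ n)
    {i : ℕ} (h : ¬(1 ≤ i ∧ i ≤ n)) : σ (true, i) = (true, n + 1) := by
  have he := hσ (true, i) rfl
  change EN n (true, i) (σ (true, i)) at he
  simp only [EN] at he
  split_ifs at he with h1 h2 h3
  · exact he
  · omega
  · omega
  · exact he

lemma sigma_opts {n : ℕ} {σ : VN → VN} (hσ : (GameN n).Strat0Valid σ)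
    {i : ℕ} (h1 : 1 ≤ i) (h2 : i ≤ n) :
    σ (true, i) = (true, i + 1) ∨ σ (true, i) = (false, i + 1) ∨
      (2 ≤ i ∧ σ (true, i) = (true, 1)) := by
  have he := hσ (true, i) rfl
  change EN n (true, i) (σ (true, i)) at he
  simp only [EN] at he
  split_ifs at he with hh1 hh2 hh3
  · omega
  · subst hh2
    rcases he with he | he
    · exact Or.inl he
    · exact Or.inr (Or.inl he)
  · rcases he with he | he | he
    · exact Or.inr (Or.inr ⟨hh3.1, he⟩)
    · exact Or.inl he
    · exact Or.inr (Or.inl he)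
  · omega

lemma tau_forced {n : ℕ} {τ : VN → VN} (hτ : (GameN n).Strat1Valid τ)
    {k : ℕ} (h : ¬(1 ≤ k ∧ k ≤ n)) : τ (false, k) = (true, n + 1) := by
  have he := hτ (false, k) rfl
  change EN n (false, k) (τ (false, k)) at he
  simp only [EN] at he
  split_ifs at he with h1 h2 h3
  · exact he
  · omega
  · omega
  · exact he

lemma tau_opts {n : ℕ} {τ : VN → VN} (hτ : (GameN n).Strat1Valid τ)
    {k : ℕ} (h1 : 1 ≤ k) (h2 : k ≤ n) :
    τ (false, k) = (true, k + 1) ∨ τ (false, k) = (false, k + 1) ∨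
      (2 ≤ k ∧ τ (false, k) = (false, 1)) := by
  have he := hτ (false, k) rfl
  change EN n (false, k) (τ (false, k)) at he
  simp only [EN] at he
  split_ifs at he with hh1 hh2 hh3
  · omega
  · subst hh2
    rcases he with he | he
    · exact Or.inl he
    · exact Or.inr (Or.inl he)
  · rcases he with he | he | he
    · exact Or.inr (Or.inr ⟨hh3.1, he⟩)
    · exact Or.inl he
    · exact Or.inr (Or.inl he)
  · omega

lemma pA {n i : ℕ} (h1 : 1 ≤ i) (h2 : i ≤ n) : pN n (true, i) = 2 * (i : ℤ) + 1 := by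
  simp [pN, h1, h2]

lemma pD {n k : ℕ} (h1 : 1 ≤ k) (h2 : k ≤ n + 1) : pN n (false, k) = 2 * (k : ℤ) + 2 := by
  simp [pN, h1, h2]

lemma pN_pos (n : ℕ) (v : VN) : 1 ≤ pN n v := by
  obtain ⟨b, i⟩ := v
  cases b <;> simp only [pN] <;> split_ifs <;> omega

lemma pN_le (n : ℕ) (v : VN) : pN n v ≤ 2 * (n : ℤ) + 4 := by
  obtain ⟨b, i⟩ := v
  cases b <;> simp only [pN] <;> split_ifs <;> omega

lemma step_top {n : ℕ} {σ τ : VN → VN} (hσ : (GameN n).Strat0Valid σ) :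
    (GameN n).step σ τ (true, n + 1) = (true, n + 1) := by
  rw [stepA]
  have he := hσ (true, n + 1) rfl
  change EN n (true, n + 1) (σ (true, n + 1)) at he
  simp only [EN, if_pos rfl] at he
  exact he

lemma step_snd_le {n : ℕ} {σ τ : VN → VN} (hσ : (GameN n).Strat0Valid σ)
    (hτ : (GameN n).Strat1Valid τ) (v : VN) : ((GameN n).step σ τ v).2 ≤ n + 1 := by
  obtain ⟨b, i⟩ := v
  cases b
  · rw [stepD]
    have he := hτ (false, i) rfl
    change EN n (false, i) (τ (false, i)) at he
    exact EN_snd he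
  · rw [stepA]
    have he := hσ (true, i) rfl
    change EN n (true, i) (σ (true, i)) at he
    exact EN_snd he

end GameBasic
section Periodicity

lemma pG (n : ℕ) : (GameN n).p = pN n := rfl

lemma theta_fin_support {n : ℕ} {σ τ : VN → VN} {v : VN} {B : ℤ → ℕ}
    (h : theta (GameN n) (true, n+1) σ τ v = EV.fin B) :
    ∀ q : ℤ, (q < 1 ∨ 2*(n:ℤ)+4 < q) → B q = 0 := by
  intro q hq
  rw [theta] at h
  split_ifs at h with h1 h2
  · injection h with hB
    rw [← hB]
    simp only []
    rw [Finset.card_eq_zero, Finset.filter_eq_empty_iff]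
    intro j _
    have hp1 := pN_pos n ((GameN n).play σ τ v j)
    have hp2 := pN_le n ((GameN n).play σ τ v j)
    rw [pG] at *
    intro hc
    rw [hc] at hp1 hp2
    omega
  all_goals exact EV.noConfusion h

lemma exists_period {n : ℕ} {σ τ : VN → VN} (hσ : (GameN n).Strat0Valid σ)
    (hτ : (GameN n).Strat1Valid τ) (v : VN) :
    ∃ l d : ℕ, 0 < d ∧ ∀ k, (GameN n).play σ τ v (l+k+d) = (GameN n).play σ τ v (l+k) := by
  classical
  set R : Finset VN := ((Finset.univ : Finset Bool) ×ˢ Finset.range (n+2)) ∪ {v} with hR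
  have hmem : ∀ m, (GameN n).play σ τ v m ∈ R := by
    intro m
    cases m with
    | zero => exact Finset.mem_union_right _ (Finset.mem_singleton_self v)
    | succ k =>
      rw [play_succ']
      apply Finset.mem_union_left
      rw [Finset.mem_product]
      refine ⟨Finset.mem_univ _, Finset.mem_range.mpr ?_⟩
      have := step_snd_le hσ hτ ((GameN n).play σ τ v k)
      omega
  obtain ⟨x, hx, y, hy, hxy, hpxy⟩ :=
    Finset.exists_ne_map_eq_of_card_lt_of_maps_to
      (s := Finset.range (R.card + 1)) (t := R)
      (by rw [Finset.card_range]; omega) (fun m _ => hmem m)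
  rcases Nat.lt_or_ge x y with hlt | hge
  · refine ⟨x, y - x, by omega, fun k => ?_⟩
    have e1 : x + k + (y - x) = k + y := by omega
    have e2 : x + k = k + x := by omega
    rw [e1, e2, play_add, play_add, ← hpxy]
  · have hlt : y < x := by omega
    refine ⟨y, x - y, by omega, fun k => ?_⟩
    have e1 : y + k + (x - y) = k + x := by omega
    have e2 : y + k = k + y := by omega
    rw [e1, e2, play_add, play_add, hpxy]

lemma theta_class {n : ℕ} (σ τ : VN → VN) {v : VN} {l d : ℕ} (hd : 0 < d)
    (hper : ∀ k, (GameN n).play σ τ v (l+k+d) = (GameN n).play σ τ v (l+k))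
    (hnt : ∀ m, (GameN n).play σ τ v m ≠ (true, n+1)) :
    ∃ q : ℤ, (∃ k, k < d ∧ pN n ((GameN n).play σ τ v (l+k)) = q) ∧
      (∀ k, k < d → pN n ((GameN n).play σ τ v (l+k)) ≤ q) ∧
      ((Even q ∧ theta (GameN n) (true, n+1) σ τ v = EV.pos) ∨
       (Odd q ∧ theta (GameN n) (true, n+1) σ τ v = EV.neg)) := by
  classical
  have hmod : ∀ m, (GameN n).play σ τ v (l+m) = (GameN n).play σ τ v (l + m % d) := by
    intro m
    induction m using Nat.strong_induction_on with
    | _ m ih =>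
      by_cases hm : m < d
      · rw [Nat.mod_eq_of_lt hm]
      · have h1 : m - d < m := by omega
        have e : l + m = l + (m - d) + d := by omega
        rw [e, hper (m - d), ih (m - d) h1]
        congr 2
        rw [← Nat.add_mod_right (m - d) d]
        congr 1
        omega
  set Q : Finset ℤ := (Finset.range d).image (fun k => pN n ((GameN n).play σ τ v (l+k)))
    with hQ
  have hQne : Q.Nonempty := ⟨pN n ((GameN n).play σ τ v (l+0)),
    Finset.mem_image.mpr ⟨0, Finset.mem_range.mpr hd, rfl⟩⟩
  set q := Q.max' hQne with hq
  have hmem : ∃ k, k < d ∧ pN n ((GameN n).play σ τ v (l+k)) = q := by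
    obtain ⟨k, hk, hkq⟩ := Finset.mem_image.mp (Q.max'_mem hQne)
    exact ⟨k, Finset.mem_range.mp hk, hkq⟩
  have hbd : ∀ k, k < d → pN n ((GameN n).play σ τ v (l+k)) ≤ q :=
    fun k hk => Q.le_max' _ (Finset.mem_image.mpr ⟨k, Finset.mem_range.mpr hk, rfl⟩)
  have hio : ∀ r : ℤ, InfOft (GameN n) σ τ v r ↔
      ∃ k, k < d ∧ pN n ((GameN n).play σ τ v (l+k)) = r := by
    intro r
    constructor
    · intro h
      obtain ⟨m, hm1, hm2⟩ := h l
      refine ⟨(m - l) % d, Nat.mod_lt _ hd, ?_⟩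
      rw [← hmod (m - l)]
      have e : l + (m - l) = m := by omega
      rw [e]
      exact hm2
    · rintro ⟨k, hk, hr⟩ N
      have hdN : N ≤ d * (N + 1) := by
        calc N ≤ N + 1 := by omega
        _ ≤ d * (N+1) := Nat.le_mul_of_pos_left _ hd
      refine ⟨l + (k + d * (N+1)), by omega, ?_⟩
      rw [hmod (k + d * (N+1))]
      rw [Nat.add_mul_mod_self_left, Nat.mod_eq_of_lt hk]
      exact hr
  have hre : ¬ ∃ m, (GameN n).play σ τ v m = (true, n+1) := by
    rintro ⟨m, hm⟩; exact hnt m hm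
  refine ⟨q, hmem, hbd, ?_⟩
  rcases Int.even_or_odd q with he | ho
  · refine Or.inl ⟨he, ?_⟩
    rw [theta, dif_neg hre, if_pos]
    refine ⟨q, (hio q).mpr hmem, he, fun q' hq' => ?_⟩
    obtain ⟨k, hk, hkq⟩ := (hio q').mp hq'
    rw [← hkq]
    exact hbd k hk
  · refine Or.inr ⟨ho, ?_⟩
    rw [theta, dif_neg hre, if_neg]
    rintro ⟨r, h1, h2, h3⟩
    obtain ⟨k, hk, hkq⟩ := (hio r).mp h1
    have h4 : r ≤ q := hkq ▸ hbd k hk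
    have h5 : q ≤ r := h3 q ((hio q).mpr hmem)
    have : q = r := le_antisymm h5 h4
    rw [← this] at h2
    exact (Int.not_odd_iff_even.mpr h2) ho

end Periodicity
section RegimeOne

lemma EN_D_eq (n k : ℕ) (w : VN) : EN n (false, k) w =
    (if k = n + 1 then w = (true, n + 1)
     else if k = 1 then w = (true, 2) ∨ w = (false, 2)
     else if 2 ≤ k ∧ k ≤ n then w = (false, 1) ∨ w = (true, k + 1) ∨ w = (false, k + 1)
     else w = (true, n + 1)) := rfl

lemma EN_A_eq (n i : ℕ) (w : VN) : EN n (true, i) w =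
    (if i = n + 1 then w = (true, n + 1)
     else if i = 1 then w = (true, 2) ∨ w = (false, 2)
     else if 2 ≤ i ∧ i ≤ n then w = (true, 1) ∨ w = (true, i + 1) ∨ w = (false, i + 1)
     else w = (true, n + 1)) := rfl

/-- Edge intro helpers. -/
lemma EN_D1_A2 {n : ℕ} (hn : 1 ≤ n) : EN n (false, 1) (true, 2) := by
  rw [EN_D_eq, if_neg (by omega), if_pos rfl]
  exact Or.inl rfl

lemma EN_Dk_D1 {n k : ℕ} (h1 : 2 ≤ k) (h2 : k ≤ n) : EN n (false, k) (false, 1) := by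
  rw [EN_D_eq, if_neg (by omega), if_neg (by omega), if_pos ⟨h1, h2⟩]
  exact Or.inl rfl

lemma EN_Dk_Dsucc {n k : ℕ} (h1 : 1 ≤ k) (h2 : k ≤ n) : EN n (false, k) (false, k+1) := by
  rw [EN_D_eq, if_neg (by omega)]
  by_cases hk : k = 1
  · subst hk; rw [if_pos rfl]; exact Or.inr rfl
  · rw [if_neg hk, if_pos ⟨by omega, h2⟩]; exact Or.inr (Or.inr rfl)

lemma EN_Dk_Asucc {n k : ℕ} (h1 : 1 ≤ k) (h2 : k ≤ n) : EN n (false, k) (true, k+1) := by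
  rw [EN_D_eq, if_neg (by omega)]
  by_cases hk : k = 1
  · subst hk; rw [if_pos rfl]; exact Or.inl rfl
  · rw [if_neg hk, if_pos ⟨by omega, h2⟩]; exact Or.inr (Or.inl rfl)

lemma EN_D_top {n k : ℕ} (h : ¬(1 ≤ k ∧ k ≤ n)) : EN n (false, k) (true, n+1) := by
  rw [EN_D_eq]
  by_cases hk : k = n + 1
  · rw [if_pos hk]
  · rw [if_neg hk, if_neg (by omega), if_neg (by omega)]

/-- Player-1 nodes where a real choice exists. -/
def FreeD (n : ℕ) (x : VN) : Prop := x.1 = false ∧ 1 ≤ x.2 ∧ x.2 ≤ n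

/-- `σ` admits an odd cycle: the initial advancing segment `a_1 → ⋯ → a_b` breaks
either by a reset to `a_1`, or by an exit to `d_{b+1}` with a reset available above. -/
def NegPossible (n : ℕ) (σ : VN → VN) : Prop :=
  ∃ b, 1 ≤ b ∧ b ≤ n ∧ (∀ i, 1 ≤ i → i < b → σ (true, i) = (true, i+1)) ∧
    ((2 ≤ b ∧ σ (true, b) = (true, 1)) ∨
     (σ (true, b) = (false, b+1) ∧ b+1 ≤ n ∧
       ∃ M, b+2 ≤ M ∧ M ≤ n ∧ σ (true, M) = (true, 1)))

lemma regime1_opt {n : ℕ} {σ τbar : VN → VN} (hσ : (GameN n).Strat0Valid σ)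
    (hτbar : (GameN n).Strat1Valid τbar)
    (hfree : ∀ x : VN, FreeD n x → theta (GameN n) (true, n+1) σ τbar x = EV.neg) :
    OptCounter1 (GameN n) (true, n+1) σ τbar := by
  classical
  refine ⟨hτbar, fun τ hτ v => ?_⟩
  by_cases hreach : ∃ m, FreeD n ((GameN n).play σ τbar v m)
  · obtain ⟨m, hm⟩ := hreach
    have hng := theta_neg_of (GameN n) (true, n+1) σ τbar (step_top hσ) m (hfree _ hm)
    rw [hng]
    exact neg_ele _
  · push_neg at hreach
    have hag : ∀ m, (GameN n).play σ τ v m = (GameN n).play σ τbar v m := by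
      apply play_agree
      intro m
      have hnf := hreach m
      rcases hxx : (GameN n).play σ τbar v m with ⟨bb, k⟩
      rw [hxx] at hnf
      cases bb
      · have hk : ¬ (1 ≤ k ∧ k ≤ n) := by
          intro hc; exact hnf ⟨rfl, hc.1, hc.2⟩
        rw [stepD, stepD, tau_forced hτ hk, tau_forced hτbar hk]
      · rw [stepA, stepA]
    exact Or.inr (theta_congr (GameN n) (true, n+1) σ τbar τ (fun m => (hag m).symm))

/-- The counterstrategy for the case of a pure `a`-cycle `a_1 … a_b`. -/
def tbar1 (n : ℕ) : VN → VN := fun x =>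
  if x.1 = true then (true, n+1)
  else if x.2 = 1 then (true, 2)
  else if 2 ≤ x.2 ∧ x.2 ≤ n then (false, 1)
  else (true, n+1)

lemma tbar1_D (n k : ℕ) : tbar1 n (false, k) =
    if k = 1 then (true, 2) else if 2 ≤ k ∧ k ≤ n then (false, 1) else (true, n+1) := by
  simp [tbar1]

lemma tbar1_valid {n : ℕ} (hn : 1 ≤ n) : (GameN n).Strat1Valid (tbar1 n) := by
  rintro ⟨bb, k⟩ hb
  change bb = false at hb
  subst hb
  change EN n (false, k) (tbar1 n (false, k))
  rw [tbar1_D]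
  by_cases hk1 : k = 1
  · subst hk1
    rw [if_pos rfl]
    exact EN_D1_A2 hn
  · rw [if_neg hk1]
    by_cases hk2 : 2 ≤ k ∧ k ≤ n
    · rw [if_pos hk2]
      exact EN_Dk_D1 hk2.1 hk2.2
    · rw [if_neg hk2]
      exact EN_D_top (by omega)

lemma regime1_case1 {n : ℕ} (hn : 1 ≤ n) {σ : VN → VN} (hσ : (GameN n).Strat0Valid σ)
    {b : ℕ} (hb1 : 2 ≤ b) (hb2 : b ≤ n)
    (hpre : ∀ i, 1 ≤ i → i < b → σ (true, i) = (true, i+1))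
    (hres : σ (true, b) = (true, 1)) :
    OptCounter1 (GameN n) (true, n+1) σ (tbar1 n) := by
  classical
  have hchain : ∀ t, t < b → (GameN n).play σ (tbar1 n) (true, 1) t = (true, t+1) := by
    intro t
    induction t with
    | zero => intro _; rfl
    | succ k ih =>
      intro hk
      rw [play_succ', ih (by omega), stepA]
      exact hpre (k+1) (by omega) (by omega)
  have hcyc : (GameN n).play σ (tbar1 n) (true, 1) b = (true, 1) := by
    have hb' : b = (b-1) + 1 := by omega
    rw [hb', play_succ', hchain (b-1) (by omega), stepA]
    have e : b - 1 + 1 = b := by omega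
    rw [e, hres]
  have hper : ∀ k, (GameN n).play σ (tbar1 n) (true, 1) (0 + k + b) = (GameN n).play σ (tbar1 n) (true, 1) (0 + k) := by
    intro k
    simp only [Nat.zero_add]
    calc (GameN n).play σ (tbar1 n) (true, 1) (k + b) = (GameN n).play σ (tbar1 n) ((GameN n).play σ (tbar1 n) (true, 1) b) k := by
          rw [← play_add]
      _ = (GameN n).play σ (tbar1 n) (true, 1) k := by rw [hcyc]
  have hmemA : ∀ m, ∃ j, j < b ∧ (GameN n).play σ (tbar1 n) (true, 1) m = (true, j+1) := by
    intro m
    induction m with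
    | zero => exact ⟨0, by omega, rfl⟩
    | succ k ih =>
      obtain ⟨j, hj, hjp⟩ := ih
      rw [play_succ', hjp, stepA]
      by_cases hjb : j + 1 < b
      · exact ⟨j+1, hjb, hpre (j+1) (by omega) hjb⟩
      · have e : j + 1 = b := by omega
        rw [e, hres]
        exact ⟨0, by omega, rfl⟩
  have hnt : ∀ m, (GameN n).play σ (tbar1 n) (true, 1) m ≠ (true, n+1) := by
    intro m hc
    obtain ⟨j, hj, hjp⟩ := hmemA m
    rw [hjp] at hc
    have : j + 1 = n + 1 := by injection hc with h1 h2
    omega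
  obtain ⟨q, hqmem, hqbd, hqcase⟩ := theta_class σ (tbar1 n) (by omega : 0 < b) hper hnt
  have hq : q = 2 * (b : ℤ) + 1 := by
    obtain ⟨k, hk, hkq⟩ := hqmem
    have h1 : q ≤ 2 * (b:ℤ) + 1 := by
      rw [← hkq]
      obtain ⟨j, hj, hjp⟩ := hmemA (0 + k)
      rw [hjp, pA (by omega) (by omega)]
      omega
    have h2 : 2 * (b:ℤ) + 1 ≤ q := by
      have hh := hqbd (b-1) (by omega)
      rw [show (0 + (b-1)) = b-1 from by omega, hchain (b-1) (by omega),
        pA (by omega) (by omega)] at hh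
      omega
    omega
  have hA1 : theta (GameN n) (true, n+1) σ (tbar1 n) (true, 1) = EV.neg := by
    rcases hqcase with ⟨he, _⟩ | ⟨_, hth⟩
    · exfalso
      rw [hq] at he
      rcases he with ⟨r, hr⟩
      omega
    · exact hth
  have htail : ∀ t, theta (GameN n) (true, n+1) σ (tbar1 n) ((GameN n).play σ (tbar1 n) (true, 1) t) = EV.neg := by
    intro t
    induction t with
    | zero => exact hA1
    | succ k ih =>
      rw [play_succ']
      have hkt := hnt k
      rw [theta_step (GameN n) (true, n+1) σ (tbar1 n) hkt] at ih
      exact (oplus_eq_neg_iff _ _).mp ih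
  have hA2 : theta (GameN n) (true, n+1) σ (tbar1 n) (true, 2) = EV.neg := by
    have hh := htail 1
    rw [hchain 1 hb1] at hh
    exact hh
  have hD1 : theta (GameN n) (true, n+1) σ (tbar1 n) (false, 1) = EV.neg := by
    have hst1 : (GameN n).step σ (tbar1 n) (false, 1) = (true, 2) := by
      rw [stepD, tbar1_D, if_pos rfl]
    have hne : ((false, 1) : VN) ≠ (true, n+1) := by simp
    rw [theta_step (GameN n) (true, n+1) σ (tbar1 n) hne, hst1, hA2]
    rfl
  apply regime1_opt hσ (tbar1_valid hn)
  rintro ⟨bb, k⟩ ⟨hf1, hf2, hf3⟩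
  change bb = false at hf1
  subst hf1
  by_cases hk1 : k = 1
  · subst hk1; exact hD1
  · have hst : (GameN n).step σ (tbar1 n) (false, k) = (false, 1) := by
      rw [stepD, tbar1_D, if_neg hk1, if_pos ⟨by omega, hf3⟩]
    have hne : ((false, k) : VN) ≠ (true, n+1) := by simp
    rw [theta_step (GameN n) (true, n+1) σ (tbar1 n) hne, hst, hD1]
    rfl

end RegimeOne
section RegimeOneB

/-- Counterstrategy realizing the odd cycle
`a_1 ⋯ a_b d_{b+1} ⋯ d_{M-1} a_M a_1`. -/
def tbar2 (n M : ℕ) : VN → VN := fun x =>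
  if x.1 = true then (true, n+1)
  else if 1 ≤ x.2 ∧ x.2 ≤ M - 2 then (false, x.2 + 1)
  else if x.2 = M - 1 then (true, M)
  else if M ≤ x.2 ∧ x.2 ≤ n then (false, 1)
  else (true, n+1)

lemma tbar2_D (n M k : ℕ) : tbar2 n M (false, k) =
    if 1 ≤ k ∧ k ≤ M - 2 then (false, k + 1)
    else if k = M - 1 then (true, M)
    else if M ≤ k ∧ k ≤ n then (false, 1)
    else (true, n+1) := by
  simp [tbar2]

lemma tbar2_valid {n M : ℕ} (hM3 : 3 ≤ M) (hMn : M ≤ n) :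
    (GameN n).Strat1Valid (tbar2 n M) := by
  rintro ⟨bb, k⟩ hb
  change bb = false at hb
  subst hb
  change EN n (false, k) (tbar2 n M (false, k))
  rw [tbar2_D]
  by_cases h1 : 1 ≤ k ∧ k ≤ M - 2
  · rw [if_pos h1]
    exact EN_Dk_Dsucc h1.1 (by omega)
  · rw [if_neg h1]
    by_cases h2 : k = M - 1
    · rw [if_pos h2]
      have e : M = k + 1 := by omega
      rw [e]
      exact EN_Dk_Asucc (by omega) (by omega)
    · rw [if_neg h2]
      by_cases h3 : M ≤ k ∧ k ≤ n
      · rw [if_pos h3]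
        exact EN_Dk_D1 (by omega) h3.2
      · rw [if_neg h3]
        exact EN_D_top (by omega)

lemma regime1_case2 {n : ℕ} (hn : 1 ≤ n) {σ : VN → VN} (hσ : (GameN n).Strat0Valid σ)
    {b M : ℕ} (hb1 : 1 ≤ b) (hbn : b + 1 ≤ n)
    (hpre : ∀ i, 1 ≤ i → i < b → σ (true, i) = (true, i+1))
    (hexit : σ (true, b) = (false, b+1))
    (hM1 : b + 2 ≤ M) (hMn : M ≤ n) (hres : σ (true, M) = (true, 1)) :
    OptCounter1 (GameN n) (true, n+1) σ (tbar2 n M) := by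
  classical
  have hM3 : 3 ≤ M := by omega
  have hg : ∀ t, t < M → (GameN n).play σ (tbar2 n M) (true, 1) t =
      (if t + 1 ≤ b then ((true, t+1) : VN)
       else if t + 1 ≤ M - 1 then (false, t+1) else (true, M)) := by
    intro t
    induction t with
    | zero => intro _; rw [if_pos (by omega)]; rfl
    | succ k ih =>
      intro hk
      rw [play_succ', ih (by omega)]
      by_cases hc1 : k + 1 ≤ b
      · rw [if_pos hc1, stepA]
        by_cases hc2 : k + 1 < b
        · rw [hpre (k+1) (by omega) hc2, if_pos (by omega)]
        · have e : k + 1 = b := by omega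
          rw [e, hexit, if_neg (by omega), if_pos (by omega)]
      · rw [if_neg hc1]
        by_cases hc2 : k + 1 ≤ M - 1
        · rw [if_pos hc2, stepD, tbar2_D]
          by_cases hc3 : k + 1 ≤ M - 2
          · rw [if_pos ⟨by omega, hc3⟩, if_neg (by omega), if_pos (by omega)]
          · have e : k + 1 = M - 1 := by omega
            rw [if_neg (by omega), if_pos e, if_neg (by omega), if_neg (by omega)]
        · omega
  have hcyc : (GameN n).play σ (tbar2 n M) (true, 1) M = (true, 1) := by
    have h1 : (GameN n).play σ (tbar2 n M) (true, 1) ((M-1)+1) = (true, 1) := by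
      rw [play_succ', hg (M-1) (by omega), if_neg (by omega), if_neg (by omega), stepA]
      exact hres
    have e : (M-1)+1 = M := by omega
    rwa [e] at h1
  have hper : ∀ k, (GameN n).play σ (tbar2 n M) (true, 1) (0 + k + M) =
      (GameN n).play σ (tbar2 n M) (true, 1) (0 + k) := by
    intro k
    simp only [Nat.zero_add]
    calc (GameN n).play σ (tbar2 n M) (true, 1) (k + M)
        = (GameN n).play σ (tbar2 n M) ((GameN n).play σ (tbar2 n M) (true, 1) M) k := by
          rw [← play_add]
      _ = (GameN n).play σ (tbar2 n M) (true, 1) k := by rw [hcyc]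
  have hmem : ∀ m, ∃ t, t < M ∧ (GameN n).play σ (tbar2 n M) (true, 1) m =
      (GameN n).play σ (tbar2 n M) (true, 1) t := by
    intro m
    induction m with
    | zero => exact ⟨0, by omega, rfl⟩
    | succ k ih =>
      obtain ⟨t, ht, htp⟩ := ih
      rw [play_succ', htp, ← play_succ']
      by_cases htM : t + 1 < M
      · exact ⟨t+1, htM, rfl⟩
      · have e : t + 1 = M := by omega
        rw [e, hcyc]
        exact ⟨0, by omega, rfl⟩
  have hnt : ∀ m, (GameN n).play σ (tbar2 n M) (true, 1) m ≠ (true, n+1) := by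
    intro m hc
    obtain ⟨t, ht, htp⟩ := hmem m
    rw [htp] at hc
    rw [hg t ht] at hc
    split_ifs at hc <;> (try injection hc with h1 h2) <;> omega
  obtain ⟨q, hqmem, hqbd, hqcase⟩ := theta_class σ (tbar2 n M) (by omega : 0 < M) hper hnt
  have hq : q = 2 * (M : ℤ) + 1 := by
    obtain ⟨k, hk, hkq⟩ := hqmem
    have h1 : q ≤ 2 * (M:ℤ) + 1 := by
      rw [← hkq]
      rw [show (0 + k) = k from by omega, hg k hk]
      split_ifs with d1 d2
      · rw [pA (by omega) (by omega)]; omega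
      · rw [pD (by omega) (by omega)]; omega
      · rw [pA (by omega) (by omega)]
    have h2 : 2 * (M:ℤ) + 1 ≤ q := by
      have hh := hqbd (M-1) (by omega)
      rw [show (0 + (M-1)) = M-1 from by omega, hg (M-1) (by omega),
        if_neg (by omega), if_neg (by omega), pA (by omega) (by omega)] at hh
      omega
    omega
  have hA1 : theta (GameN n) (true, n+1) σ (tbar2 n M) (true, 1) = EV.neg := by
    rcases hqcase with ⟨he, _⟩ | ⟨_, hth⟩
    · exfalso
      rw [hq] at he
      rcases he with ⟨r, hr⟩
      omega
    · exact hth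
  have htail : ∀ t, theta (GameN n) (true, n+1) σ (tbar2 n M)
      ((GameN n).play σ (tbar2 n M) (true, 1) t) = EV.neg := by
    intro t
    induction t with
    | zero => exact hA1
    | succ k ih =>
      rw [play_succ']
      rw [theta_step (GameN n) (true, n+1) σ (tbar2 n M) (hnt k)] at ih
      exact (oplus_eq_neg_iff _ _).mp ih
  have hAM : theta (GameN n) (true, n+1) σ (tbar2 n M) (true, M) = EV.neg := by
    have hh := htail (M-1)
    rw [hg (M-1) (by omega), if_neg (by omega), if_neg (by omega)] at hh
    exact hh
  have hDdown : ∀ j, j ≤ M - 2 → theta (GameN n) (true, n+1) σ (tbar2 n M)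
      (false, M - 1 - j) = EV.neg := by
    intro j
    induction j with
    | zero =>
      intro _
      have hne : ((false, M-1-0) : VN) ≠ (true, n+1) := by simp
      rw [theta_step (GameN n) (true, n+1) σ (tbar2 n M) hne, stepD, tbar2_D]
      rw [if_neg (by omega), if_pos (by omega : M - 1 - 0 = M - 1), hAM]
      rfl
    | succ j ih =>
      intro hj
      have hne : ((false, M-1-(j+1)) : VN) ≠ (true, n+1) := by simp
      rw [theta_step (GameN n) (true, n+1) σ (tbar2 n M) hne, stepD, tbar2_D]
      rw [if_pos ⟨by omega, by omega⟩]
      have e : M - 1 - (j+1) + 1 = M - 1 - j := by omega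
      rw [e, ih (by omega)]
      rfl
  have hDlow : ∀ k, 1 ≤ k → k ≤ M - 1 → theta (GameN n) (true, n+1) σ (tbar2 n M)
      (false, k) = EV.neg := by
    intro k h1 h2
    have e : k = M - 1 - (M - 1 - k) := by omega
    rw [e]
    exact hDdown (M - 1 - k) (by omega)
  apply regime1_opt hσ (tbar2_valid hM3 hMn)
  rintro ⟨bb, k⟩ ⟨hf1, hf2, hf3⟩
  change bb = false at hf1
  subst hf1
  by_cases hkM : k ≤ M - 1
  · exact hDlow k hf2 hkM
  · have hne : ((false, k) : VN) ≠ (true, n+1) := by simp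
    rw [theta_step (GameN n) (true, n+1) σ (tbar2 n M) hne, stepD, tbar2_D]
    rw [if_neg (by omega), if_neg (by omega), if_pos ⟨by omega, hf3⟩,
      hDlow 1 (by omega) (by omega)]
    rfl

end RegimeOneB
section RegimeTwo

/-- Decoding of a choice at `d_k`. -/
def decodeC (k : ℕ) (t : Fin 3) : VN :=
  if t = 0 then (if k = 1 then (true, 2) else (false, 1))
  else if t = 1 then (true, k+1) else (false, k+1)

/-- Finitely-parametrized family of player-1 strategies. -/
def tfam (n : ℕ) (c : Fin (n+1) → Fin 3) : VN → VN := fun x =>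
  if h : x.1 = false ∧ 1 ≤ x.2 ∧ x.2 ≤ n then decodeC x.2 (c ⟨x.2 - 1, by omega⟩)
  else (true, n+1)

lemma tfam_valid (n : ℕ) (c : Fin (n+1) → Fin 3) : (GameN n).Strat1Valid (tfam n c) := by
  rintro ⟨bb, k⟩ hb
  change bb = false at hb
  subst hb
  change EN n (false, k) (tfam n c (false, k))
  by_cases h : 1 ≤ k ∧ k ≤ n
  · have e : tfam n c (false, k) = decodeC k (c ⟨k - 1, by omega⟩) := by
      simp [tfam, h.1, h.2]
    rw [e]
    set t := c ⟨k - 1, by omega⟩ with ht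
    by_cases ht0 : t = 0
    · rw [decodeC, if_pos ht0]
      by_cases hk1 : k = 1
      · rw [if_pos hk1, hk1]
        exact EN_D1_A2 (by omega)
      · rw [if_neg hk1]
        exact EN_Dk_D1 (by omega) h.2
    · by_cases ht1 : t = 1
      · rw [decodeC, if_neg ht0, if_pos ht1]
        exact EN_Dk_Asucc h.1 h.2
      · rw [decodeC, if_neg ht0, if_neg ht1]
        exact EN_Dk_Dsucc h.1 h.2
  · have e : tfam n c (false, k) = (true, n+1) := by
      simp only [tfam]
      rw [dif_neg]
      simp only [not_and]
      intro _ h1 h2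
      exact h ⟨h1, h2⟩
    rw [e]
    exact EN_D_top h

lemma tfam_agree {n : ℕ} {τ : VN → VN} (hτ : (GameN n).Strat1Valid τ) :
    ∃ c, ∀ x : VN, x.1 = false → tfam n c x = τ x := by
  classical
  have key : ∀ k, 1 ≤ k → k ≤ n →
      decodeC k (if τ (false, (k-1) + 1) = (true, (k-1) + 1 + 1) then 1
        else if τ (false, (k-1) + 1) = (false, (k-1) + 1 + 1) then 2 else 0) = τ (false, k) := by
    intro k h1 h2
    have ek : k - 1 + 1 = k := by omega
    rw [ek]
    rcases tau_opts hτ h1 h2 with hc | hc | ⟨hk2, hc⟩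
    · rw [hc, if_pos rfl]; rfl
    · rw [hc, if_neg (by simp), if_pos rfl]; rfl
    · rw [hc, if_neg (by simp), if_neg (by simp; omega)]
      rw [decodeC, if_pos rfl, if_neg (by omega)]
  refine ⟨fun j => if τ (false, j.val + 1) = (true, j.val + 1 + 1) then 1
    else if τ (false, j.val + 1) = (false, j.val + 1 + 1) then 2 else 0, ?_⟩
  rintro ⟨bb, k⟩ hb
  change bb = false at hb
  subst hb
  by_cases h : 1 ≤ k ∧ k ≤ n
  · have e : tfam n (fun j => if τ (false, j.val + 1) = (true, j.val + 1 + 1) then 1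
        else if τ (false, j.val + 1) = (false, j.val + 1 + 1) then 2 else 0) (false, k)
        = decodeC k (if τ (false, (k-1) + 1) = (true, (k-1) + 1 + 1) then 1
            else if τ (false, (k-1) + 1) = (false, (k-1) + 1 + 1) then 2 else 0) := by
      simp [tfam, h.1, h.2]
    rw [e]
    exact key k h.1 h.2
  · have e1 : tfam n (fun j => if τ (false, j.val + 1) = (true, j.val + 1 + 1) then 1
        else if τ (false, j.val + 1) = (false, j.val + 1 + 1) then 2 else 0) (false, k)
        = (true, n+1) := by
      simp only [tfam]
      rw [dif_neg]
      simp only [not_and]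
      intro _ h1 h2
      exact h ⟨h1, h2⟩
    rw [e1, tau_forced hτ h]

lemma tfam_theta {n : ℕ} {σ τ : VN → VN} (hτ : (GameN n).Strat1Valid τ) :
    ∃ c, ∀ v, theta (GameN n) (true, n+1) σ (tfam n c) v =
      theta (GameN n) (true, n+1) σ τ v := by
  obtain ⟨c, hc⟩ := tfam_agree hτ
  refine ⟨c, fun v => ?_⟩
  have hag : ∀ m, (GameN n).play σ (tfam n c) v m = (GameN n).play σ τ v m := by
    apply play_agree
    intro m
    rcases hxx : (GameN n).play σ τ v m with ⟨bb, k⟩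
    cases bb
    · rw [stepD, stepD, hc (false, k) rfl]
    · rw [stepA, stepA]
  exact (theta_congr (GameN n) (true, n+1) σ τ (tfam n c) (fun m => (hag m).symm)).symm

lemma theta_comp {n : ℕ} {σ σ' τ τ' : VN → VN} (v w : VN) :
    ele (theta (GameN n) (true, n+1) σ τ v) (theta (GameN n) (true, n+1) σ' τ' w) ∨
    ele (theta (GameN n) (true, n+1) σ' τ' w) (theta (GameN n) (true, n+1) σ τ v) := by
  rcases hx : theta (GameN n) (true, n+1) σ τ v with _ | B
  · exact Or.inl (neg_ele _)
  · rcases hy : theta (GameN n) (true, n+1) σ' τ' w with _ | C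
    · exact Or.inr (neg_ele _)
    · have hB := theta_fin_support hx
      have hC := theta_fin_support hy
      refine fin_total (N := 2*(n:ℤ)+4) (fun q hq => hB q ?_) (fun q hq => hC q ?_) <;>
        · rw [Finset.mem_Icc] at hq; omega
    · exact Or.inl (ele_pos _)
  · exact Or.inr (ele_pos _)

lemma exists_min_ele : ∀ (s : Finset EV), s.Nonempty →
    (∀ x ∈ s, ∀ y ∈ s, ele x y ∨ ele y x) → ∃ μ ∈ s, ∀ x ∈ s, ele μ x := by
  classical
  intro s
  induction s using Finset.induction_on with
  | empty => intro h; simp at h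
  | @insert a t ha ih =>
    intro _ htot
    by_cases htne : t.Nonempty
    · obtain ⟨μ, hμt, hmin⟩ := ih htne (fun x hx y hy =>
        htot x (Finset.mem_insert_of_mem hx) y (Finset.mem_insert_of_mem hy))
      rcases htot a (Finset.mem_insert_self a t) μ (Finset.mem_insert_of_mem hμt) with h | h
      · refine ⟨a, Finset.mem_insert_self a t, fun x hx => ?_⟩
        rcases Finset.mem_insert.mp hx with rfl | hxt
        · exact ele_refl _
        · exact ele_trans h (hmin x hxt)
      · refine ⟨μ, Finset.mem_insert_of_mem hμt, fun x hx => ?_⟩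
        rcases Finset.mem_insert.mp hx with rfl | hxt
        · exact h
        · exact hmin x hxt
    · have he : t = ∅ := Finset.not_nonempty_iff_eq_empty.mp htne
      subst he
      refine ⟨a, Finset.mem_insert_self a ∅, fun x hx => ?_⟩
      rcases Finset.mem_insert.mp hx with rfl | hxt
      · exact ele_refl _
      · simp at hxt

lemma val_exists (n : ℕ) (σ : VN → VN) (v : VN) :
    ∃ μ : EV, (∃ c, μ = theta (GameN n) (true, n+1) σ (tfam n c) v) ∧
      (∀ τ, (GameN n).Strat1Valid τ → ele μ (theta (GameN n) (true, n+1) σ τ v)) := by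
  classical
  set s : Finset EV := (Finset.univ : Finset (Fin (n+1) → Fin 3)).image
    (fun c => theta (GameN n) (true, n+1) σ (tfam n c) v) with hs
  have hne : s.Nonempty := ⟨theta (GameN n) (true, n+1) σ (tfam n (fun _ => 0)) v,
    Finset.mem_image.mpr ⟨fun _ => 0, Finset.mem_univ _, rfl⟩⟩
  have htot : ∀ x ∈ s, ∀ y ∈ s, ele x y ∨ ele y x := by
    intro x hx y hy
    obtain ⟨cx, _, rfl⟩ := Finset.mem_image.mp hx
    obtain ⟨cy, _, rfl⟩ := Finset.mem_image.mp hy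
    exact theta_comp v v
  obtain ⟨μ, hμ, hmin⟩ := exists_min_ele s hne htot
  obtain ⟨c, _, hc⟩ := Finset.mem_image.mp hμ
  refine ⟨μ, ⟨c, hc.symm⟩, fun τ hτ => ?_⟩
  obtain ⟨c', hc'⟩ := tfam_theta (σ := σ) hτ
  rw [← hc' v]
  exact hmin _ (Finset.mem_image.mpr ⟨c', Finset.mem_univ _, rfl⟩)

noncomputable def Val (n : ℕ) (σ : VN → VN) (v : VN) : EV := (val_exists n σ v).choose

lemma Val_mem (n : ℕ) (σ : VN → VN) (v : VN) :
    ∃ c, Val n σ v = theta (GameN n) (true, n+1) σ (tfam n c) v :=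
  (val_exists n σ v).choose_spec.1

lemma Val_min (n : ℕ) (σ : VN → VN) (v : VN) :
    ∀ τ, (GameN n).Strat1Valid τ → ele (Val n σ v) (theta (GameN n) (true, n+1) σ τ v) :=
  (val_exists n σ v).choose_spec.2

end RegimeTwo
section RegimeTwoB

open Classical in
/-- The optimal counterstrategy: at each free `d`-node follow a strategy
attaining the minimal value there. -/
noncomputable def tbarOpt (n : ℕ) (σ : VN → VN) : VN → VN := fun x =>
  if x.1 = false ∧ 1 ≤ x.2 ∧ x.2 ≤ n then tfam n (Val_mem n σ x).choose x
  else (true, n+1)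

lemma tbarOpt_valid (n : ℕ) (σ : VN → VN) : (GameN n).Strat1Valid (tbarOpt n σ) := by
  classical
  rintro ⟨bb, k⟩ hb
  change bb = false at hb
  subst hb
  change EN n (false, k) (tbarOpt n σ (false, k))
  by_cases h : 1 ≤ k ∧ k ≤ n
  · have e : tbarOpt n σ (false, k) = tfam n (Val_mem n σ (false, k)).choose (false, k) := by
      simp only [tbarOpt]
      rw [if_pos ⟨by simp, h.1, h.2⟩]
    rw [e]
    have := tfam_valid n (Val_mem n σ (false, k)).choose (false, k) rfl
    exact this
  · have e : tbarOpt n σ (false, k) = (true, n+1) := by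
      simp only [tbarOpt]
      rw [if_neg]
      rintro ⟨_, h1, h2⟩
      exact h ⟨h1, h2⟩
    rw [e]
    exact EN_D_top h

lemma tbar_local {n : ℕ} {σ : VN → VN} (x : VN) (hx : x ≠ (true, n+1)) :
    ele (oplus (sgl ((GameN n).p x))
        (Val n σ ((GameN n).step σ (tbarOpt n σ) x)))
      (Val n σ x) := by
  classical
  set c := (Val_mem n σ x).choose with hc
  have hv : Val n σ x = theta (GameN n) (true, n+1) σ (tfam n c) x :=
    (Val_mem n σ x).choose_spec
  have hstep : (GameN n).step σ (tbarOpt n σ) x = (GameN n).step σ (tfam n c) x := by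
    rcases x with ⟨bb, k⟩
    cases bb
    · rw [stepD, stepD]
      by_cases h : 1 ≤ k ∧ k ≤ n
      · simp only [tbarOpt]
        rw [if_pos ⟨by simp, h.1, h.2⟩]
      · have e1 : tbarOpt n σ (false, k) = (true, n+1) := by
          simp only [tbarOpt]
          rw [if_neg]
          rintro ⟨_, h1, h2⟩
          exact h ⟨h1, h2⟩
        have e2 : tfam n c (false, k) = (true, n+1) := by
          simp only [tfam]
          rw [dif_neg]
          rintro ⟨_, h1, h2⟩
          exact h ⟨h1, h2⟩
        rw [e1, e2]
    · rw [stepA, stepA]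
  rw [hstep]
  have hv2 : Val n σ x = oplus (sgl ((GameN n).p x))
      (theta (GameN n) (true, n+1) σ (tfam n c) ((GameN n).step σ (tfam n c) x)) := by
    rw [hv]
    exact theta_step (GameN n) (true, n+1) σ (tfam n c) hx
  rw [hv2]
  exact oplus_mono _ (Val_min n σ _ (tfam n c) (tfam_valid n c))

lemma chain {n : ℕ} {σ : VN → VN} (v : VN) :
    ∀ m : ℕ, (∀ i, i < m → (GameN n).play σ (tbarOpt n σ) v i ≠ (true, n+1)) →
    ele (oplus (fun q => ((Finset.range m).filter
          (fun j => (GameN n).p ((GameN n).play σ (tbarOpt n σ) v j) = q)).card)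
        (Val n σ ((GameN n).play σ (tbarOpt n σ) v m)))
      (Val n σ v) := by
  classical
  intro m
  induction m with
  | zero =>
    intro _
    have e : (fun q => ((Finset.range 0).filter
        (fun j => (GameN n).p ((GameN n).play σ (tbarOpt n σ) v j) = q)).card)
        = (fun _ : ℤ => 0) := by
      funext q; simp
    rw [e, oplus_zero]
    exact ele_refl _
  | succ m ih =>
    intro hnt
    have hloc := tbar_local (σ := σ) ((GameN n).play σ (tbarOpt n σ) v m)
      (hnt m (by omega))
    have hmono := oplus_mono (fun q => ((Finset.range m).filter
        (fun j => (GameN n).p ((GameN n).play σ (tbarOpt n σ) v j) = q)).card) hloc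
    have hcomb := ele_trans hmono (ih (fun i hi => hnt i (by omega)))
    rw [oplus_oplus] at hcomb
    have e : (fun q => ((Finset.range m).filter
            (fun j => (GameN n).p ((GameN n).play σ (tbarOpt n σ) v j) = q)).card
          + sgl ((GameN n).p ((GameN n).play σ (tbarOpt n σ) v m)) q)
        = (fun q => ((Finset.range (m+1)).filter
            (fun j => (GameN n).p ((GameN n).play σ (tbarOpt n σ) v j) = q)).card) := by
      funext q
      rw [Finset.card_filter, Finset.card_filter, Finset.sum_range_succ]
      rfl
    rw [e] at hcomb
    rw [← play_succ'] at hcomb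
    exact hcomb

lemma noc {n : ℕ} (hn : 1 ≤ n) {σ : VN → VN} (hσ : (GameN n).Strat0Valid σ)
    (hnp : ¬ NegPossible n σ) :
    ∀ τ, (GameN n).Strat1Valid τ → ∀ v,
      theta (GameN n) (true, n+1) σ τ v ≠ EV.neg := by
  classical
  intro τ hτ v hneg
  have hnt : ∀ m, (GameN n).play σ τ v m ≠ (true, n+1) := by
    intro m hm
    rw [theta, dif_pos ⟨m, hm⟩] at hneg
    exact EV.noConfusion hneg
  obtain ⟨l, d, hd, hper⟩ := exists_period hσ hτ v
  obtain ⟨q, hqmem, hqbd, hqcase⟩ := theta_class σ τ hd hper hnt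
  have ho : Odd q := by
    rcases hqcase with ⟨_, hp⟩ | ⟨ho, _⟩
    · rw [hp] at hneg; exact absurd hneg (by simp)
    · exact ho
  set P : VN → Prop := fun x => ∃ k, k < d ∧ (GameN n).play σ τ v (l+k) = x with hP
  have hstepP : ∀ x, P x → P ((GameN n).step σ τ x) := by
    rintro x ⟨k, hk, rfl⟩
    by_cases hk1 : k + 1 < d
    · exact ⟨k+1, hk1, by rw [← play_succ']; congr 1⟩
    · refine ⟨0, hd, ?_⟩
      have h1 := hper 0
      rw [show l + 0 + d = l + k + 1 from by omega] at h1
      rw [play_succ'] at h1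
      exact h1.symm
  have htopP : ¬ P (true, n+1) := by
    rintro ⟨k, _, hk⟩
    exact hnt _ hk
  have hbdP : ∀ x, P x → pN n x ≤ q := by
    rintro x ⟨k, hk, rfl⟩
    exact hqbd k hk
  have hno1 : ∀ x, P x → pN n x ≠ 1 := by
    rintro ⟨bb, i⟩ hPx h1
    cases bb
    · have hi : ¬ (1 ≤ i ∧ i ≤ n) := by
        intro hc
        rw [pD hc.1 (by omega)] at h1
        omega
      have := hstepP _ hPx
      rw [stepD, tau_forced hτ hi] at this
      exact htopP this
    · have hi : ¬ (1 ≤ i ∧ i ≤ n) := by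
        intro hc
        rw [pA hc.1 hc.2] at h1
        omega
      have := hstepP _ hPx
      rw [stepA, sigma_forced hσ hn hi] at this
      exact htopP this
  obtain ⟨k0, hk0, hk0q⟩ := hqmem
  have hPx0 : P ((GameN n).play σ τ v (l+k0)) := ⟨k0, hk0, rfl⟩
  rcases hx0 : (GameN n).play σ τ v (l+k0) with ⟨bb, i⟩
  rw [hx0] at hPx0 hk0q
  have hM : bb = true ∧ 1 ≤ i ∧ i ≤ n := by
    cases bb
    · by_cases hc : 1 ≤ i ∧ i ≤ n + 1
      · rw [pD hc.1 hc.2] at hk0q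
        obtain ⟨r, hr⟩ := ho
        omega
      · exfalso
        apply hno1 _ hPx0
        simp only [pN]
        rw [if_neg hc]
    · by_cases hc : 1 ≤ i ∧ i ≤ n
      · exact ⟨rfl, hc⟩
      · exfalso
        apply hno1 _ hPx0
        simp only [pN]
        rw [if_neg hc]
  obtain ⟨hbb, hM1, hM2⟩ := hM
  subst hbb
  rw [pA hM1 hM2] at hk0q
  -- the maximal node resets to a_1
  have hres : σ (true, i) = (true, 1) ∧ 2 ≤ i := by
    have hPs := hstepP _ hPx0
    rw [stepA] at hPs
    rcases sigma_opts hσ hM1 hM2 with hc | hc | ⟨h2i, hc⟩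
    · exfalso
      rw [hc] at hPs
      by_cases hin : i + 1 ≤ n
      · have := hbdP _ hPs
        rw [pA (by omega) hin] at this
        omega
      · have e : i + 1 = n + 1 := by omega
        rw [e] at hPs
        exact htopP hPs
    · exfalso
      have := hbdP _ (hc ▸ hPs)
      rw [pD (by omega) (by omega)] at this
      omega
    · exact ⟨hc, h2i⟩
  have hPA1 : P (true, 1) := by
    have hPs := hstepP _ hPx0
    rw [stepA, hres.1] at hPs
    exact hPs
  -- there is a break in the advancing chain
  have hbrk : ∃ j, 1 ≤ j ∧ j ≤ n ∧ σ (true, j) ≠ (true, j+1) := by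
    by_contra hadv
    push_neg at hadv
    have hPi : ∀ t, t ≤ n → P (true, 1 + t) := by
      intro t
      induction t with
      | zero => intro _; exact hPA1
      | succ s ih =>
        intro hs
        have hPs := hstepP _ (ih (by omega))
        rw [stepA, hadv (1+s) (by omega) (by omega)] at hPs
        have e : 1 + s + 1 = 1 + (s + 1) := by omega
        rw [e] at hPs
        exact hPs
    have := hPi n (le_refl n)
    rw [show 1 + n = n + 1 from by omega] at this
    exact htopP this
  have hQb : ∃ j, 1 ≤ j ∧ j ≤ n ∧ σ (true, j) ≠ (true, j+1) := hbrk
  obtain ⟨hb1, hb2, hb3⟩ := Nat.find_spec hQb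
  set b := Nat.find hQb with hbdef
  have hpre : ∀ i', 1 ≤ i' → i' < b → σ (true, i') = (true, i'+1) := by
    intro i' h1 h2
    by_contra hcon
    exact absurd ⟨h1, by omega, hcon⟩ (Nat.find_min hQb h2)
  have hPchain : ∀ t, t ≤ b - 1 → P (true, 1 + t) := by
    intro t
    induction t with
    | zero => intro _; exact hPA1
    | succ s ih =>
      intro hs
      have hPs := hstepP _ (ih (by omega))
      rw [stepA, hpre (1+s) (by omega) (by omega)] at hPs
      rw [show 1 + s + 1 = 1 + (s+1) from by omega] at hPs
      exact hPs
  have hPb : P (true, b) := by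
    have hh := hPchain (b-1) (le_refl _)
    rw [show 1 + (b-1) = b from by omega] at hh
    exact hh
  rcases sigma_opts hσ hb1 hb2 with hc | hc | ⟨h2b, hc⟩
  · exact hb3 hc
  · have hPs := hstepP _ hPb
    rw [stepA, hc] at hPs
    have hbd := hbdP _ hPs
    rw [pD (by omega) (by omega)] at hbd
    apply hnp
    exact ⟨b, hb1, hb2, hpre, Or.inr ⟨hc, by omega, i, by omega, hM2, hres.1⟩⟩
  · apply hnp
    exact ⟨b, hb1, hb2, hpre, Or.inl ⟨h2b, hc⟩⟩

end RegimeTwoB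
section RegimeTwoC

lemma find_irrel {p : ℕ → Prop} (i1 i2 : DecidablePred p) (h : ∃ m, p m) :
    @Nat.find p i1 h = @Nat.find p i2 h := by
  rw [Subsingleton.elim i1 i2]

lemma theta_reach_eq {n : ℕ} {σ τ : VN → VN} {v : VN}
    (hreach : ∃ m, (GameN n).play σ τ v m = (true, n+1)) :
    theta (GameN n) (true, n+1) σ τ v = EV.fin
      (fun q => ((Finset.range (Nat.find hreach)).filter
        (fun j => (GameN n).p ((GameN n).play σ τ v j) = q)).card) := by
  classical
  rw [theta, dif_pos hreach]
  congr!

lemma Val_top {n : ℕ} (σ : VN → VN) : Val n σ (true, n+1) = EV.fin (fun _ => 0) := by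
  obtain ⟨c, hc⟩ := Val_mem n σ (true, n+1)
  rw [hc, theta_top]

lemma regime2_opt {n : ℕ} (hn : 1 ≤ n) {σ : VN → VN} (hσ : (GameN n).Strat0Valid σ)
    (hnp : ¬ NegPossible n σ) :
    OptCounter1 (GameN n) (true, n+1) σ (tbarOpt n σ) := by
  classical
  refine ⟨tbarOpt_valid n σ, fun τ hτ v => ?_⟩
  by_cases hreach : ∃ m, (GameN n).play σ (tbarOpt n σ) v m = (true, n+1)
  · have hth : theta (GameN n) (true, n+1) σ (tbarOpt n σ) v = EV.fin
        (fun q => ((Finset.range (Nat.find hreach)).filter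
          (fun j => (GameN n).p ((GameN n).play σ (tbarOpt n σ) v j) = q)).card) :=
      theta_reach_eq hreach
    have hch := chain (σ := σ) v (Nat.find hreach)
      (fun i hi => Nat.find_min hreach hi)
    rw [Nat.find_spec hreach, Val_top] at hch
    have e : oplus (fun q => ((Finset.range (Nat.find hreach)).filter
          (fun j => (GameN n).p ((GameN n).play σ (tbarOpt n σ) v j) = q)).card)
        (EV.fin (fun _ => 0)) = EV.fin
        (fun q => ((Finset.range (Nat.find hreach)).filter
          (fun j => (GameN n).p ((GameN n).play σ (tbarOpt n σ) v j) = q)).card) := by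
      simp [oplus]
    rw [e] at hch
    rw [hth]
    exact ele_trans hch (Val_min n σ v τ hτ)
  · push_neg at hreach
    obtain ⟨l, d, hd, hper⟩ := exists_period hσ (tbarOpt_valid n σ) v
    obtain ⟨q, hqmem, hqbd, hqcase⟩ := theta_class σ (tbarOpt n σ) hd hper hreach
    rcases hqcase with ⟨he, hthpos⟩ | ⟨_, hthneg⟩
    swap
    · exact absurd hthneg (noc hn hσ hnp (tbarOpt n σ) (tbarOpt_valid n σ) v)
    have hplx : ∀ j, (GameN n).play σ (tbarOpt n σ) ((GameN n).play σ (tbarOpt n σ) v l) j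
        = (GameN n).play σ (tbarOpt n σ) v (l + j) := by
      intro j
      rw [show l + j = j + l from by omega, play_add]
    have hvx : Val n σ ((GameN n).play σ (tbarOpt n σ) v l) = EV.pos := by
      have hchx := chain (σ := σ) ((GameN n).play σ (tbarOpt n σ) v l) d
        (fun i _ => by rw [hplx i]; exact hreach (l + i))
      have hxd : (GameN n).play σ (tbarOpt n σ) ((GameN n).play σ (tbarOpt n σ) v l) d
          = (GameN n).play σ (tbarOpt n σ) v l := by
        rw [hplx d]
        have h1 := hper 0
        rw [show l + 0 + d = l + d from by omega, show l + 0 = l from by omega] at h1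
        exact h1
      rw [hxd] at hchx
      rcases hval : Val n σ ((GameN n).play σ (tbarOpt n σ) v l) with _ | B
      · exfalso
        obtain ⟨c, hc⟩ := Val_mem n σ ((GameN n).play σ (tbarOpt n σ) v l)
        rw [hval] at hc
        exact noc hn hσ hnp (tfam n c) (tfam_valid n c) _ hc.symm
      · exfalso
        rw [hval] at hchx
        have eop : oplus (fun r => ((Finset.range d).filter
              (fun j => (GameN n).p ((GameN n).play σ (tbarOpt n σ)
                ((GameN n).play σ (tbarOpt n σ) v l) j) = r)).card) (EV.fin B)
            = EV.fin (fun r => ((Finset.range d).filter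
              (fun j => (GameN n).p ((GameN n).play σ (tbarOpt n σ)
                ((GameN n).play σ (tbarOpt n σ) v l) j) = r)).card + B r) := rfl
        rw [eop] at hchx
        refine not_ele_of_gt_even (q₀ := q) he ?_ ?_ hchx
        · show B q < _ + B q
          have hEq : 0 < ((Finset.range d).filter
              (fun j => (GameN n).p ((GameN n).play σ (tbarOpt n σ)
                ((GameN n).play σ (tbarOpt n σ) v l) j) = q)).card := by
            obtain ⟨k0, hk0, hk0q⟩ := hqmem
            refine Finset.card_pos.mpr ⟨k0, Finset.mem_filter.mpr
              ⟨Finset.mem_range.mpr hk0, ?_⟩⟩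
            rw [hplx k0]
            rw [pG]
            exact hk0q
          omega
        · intro r hr
          show _ + B r = B r
          have hEr : ((Finset.range d).filter
              (fun j => (GameN n).p ((GameN n).play σ (tbarOpt n σ)
                ((GameN n).play σ (tbarOpt n σ) v l) j) = r)).card = 0 := by
            rw [Finset.card_eq_zero, Finset.filter_eq_empty_iff]
            intro j hj
            rw [hplx j, pG]
            have := hqbd j (Finset.mem_range.mp hj)
            omega
          omega
      · rfl
    have hch2 := chain (σ := σ) v l (fun i _ => hreach i)
    rw [hvx] at hch2
    have eop2 : oplus (fun r => ((Finset.range l).filter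
          (fun j => (GameN n).p ((GameN n).play σ (tbarOpt n σ) v j) = r)).card) EV.pos
        = EV.pos := rfl
    rw [eop2] at hch2
    have hValv : Val n σ v = EV.pos := pos_ele_iff.mp hch2
    have hτv : theta (GameN n) (true, n+1) σ τ v = EV.pos := by
      have h3 := Val_min n σ v τ hτ
      rw [hValv] at h3
      exact pos_ele_iff.mp h3
    rw [hthpos, hτv]
    exact Or.inr rfl

/-- Existence of an optimal player-1 counterstrategy against any valid `σ`. -/
lemma opt_exists {n : ℕ} (hn : 1 ≤ n) {σ : VN → VN} (hσ : (GameN n).Strat0Valid σ) :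
    ∃ τbar, OptCounter1 (GameN n) (true, n+1) σ τbar := by
  by_cases hnp : NegPossible n σ
  · obtain ⟨b, hb1, hb2, hpre, hcase⟩ := hnp
    rcases hcase with ⟨h2b, hres⟩ | ⟨hexit, hbn, M, hM1, hM2, hres⟩
    · exact ⟨tbar1 n, regime1_case1 hn hσ h2b hb2 hpre hres⟩
    · exact ⟨tbar2 n M, regime1_case2 hn hσ hb1 hbn hpre hexit hM1 hM2 hres⟩
  · exact ⟨tbarOpt n σ, regime2_opt hn hσ hnp⟩

end RegimeTwoC
section FinalAssembly

/-- Straight-to-sink player 1 strategy. -/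
def tchain (n : ℕ) : VN → VN := fun x =>
  if x.1 = true then (true, n+1)
  else if 1 ≤ x.2 ∧ x.2 ≤ n - 1 then (false, x.2 + 1)
  else (true, n+1)

lemma tchain_D (n k : ℕ) : tchain n (false, k) =
    if 1 ≤ k ∧ k ≤ n - 1 then (false, k+1) else (true, n+1) := by
  simp [tchain]

lemma tchain_valid {n : ℕ} (hn : 1 ≤ n) : (GameN n).Strat1Valid (tchain n) := by
  rintro ⟨bb, k⟩ hb
  change bb = false at hb
  subst hb
  change EN n (false, k) (tchain n (false, k))
  rw [tchain_D]
  by_cases h1 : 1 ≤ k ∧ k ≤ n - 1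
  · rw [if_pos h1]
    exact EN_Dk_Dsucc h1.1 (by omega)
  · rw [if_neg h1]
    by_cases h2 : k = n
    · rw [h2]
      exact EN_Dk_Asucc hn (le_refl n)
    · exact EN_D_top (by omega)

lemma pD_top {n : ℕ} : (GameN n).p (false, n+1) = 2*(n:ℤ)+4 := by
  rw [pG, pD (by omega) (by omega)]
  push_cast
  ring

lemma pD_n {n : ℕ} (hn : 1 ≤ n) : (GameN n).p (false, n) = 2*(n:ℤ)+2 := by
  rw [pG, pD (by omega) (by omega)]

/-- An optimal counterstrategy never moves to `d_{n+1}`. -/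
lemma opt_no_dtop {n : ℕ} (hn : 1 ≤ n) {σ τbar : VN → VN}
    (hσ : (GameN n).Strat0Valid σ)
    (hopt : OptCounter1 (GameN n) (true, n+1) σ τbar) :
    τbar (false, n) ≠ (false, n+1) := by
  intro hcon
  obtain ⟨hτbv, hmin⟩ := hopt
  have hne1 : ((false, n) : VN) ≠ (true, n+1) := by simp
  have hne2 : ((false, n+1) : VN) ≠ (true, n+1) := by simp
  have hstep1 : (GameN n).step σ τbar (false, n) = (false, n+1) := by
    rw [stepD]; exact hcon
  have hstep2 : (GameN n).step σ τbar (false, n+1) = (true, n+1) := by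
    rw [stepD]; exact tau_forced hτbv (by omega)
  have hv1 : theta (GameN n) (true, n+1) σ τbar (false, n) =
      EV.fin (fun q => sgl ((GameN n).p (false, n)) q +
        (sgl ((GameN n).p (false, n+1)) q + 0)) := by
    rw [theta_step (GameN n) (true, n+1) σ τbar hne1, hstep1,
        theta_step (GameN n) (true, n+1) σ τbar hne2, hstep2, theta_top]
    rfl
  have hstep1' : (GameN n).step σ (tchain n) (false, n) = (true, n+1) := by
    rw [stepD, tchain_D, if_neg (by omega)]
  have hv2 : theta (GameN n) (true, n+1) σ (tchain n) (false, n) =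
      EV.fin (fun q => sgl ((GameN n).p (false, n)) q + 0) := by
    rw [theta_step (GameN n) (true, n+1) σ (tchain n) hne1, hstep1', theta_top]
    rfl
  have hle := hmin (tchain n) (tchain_valid hn) (false, n)
  rw [hv1, hv2] at hle
  refine not_ele_of_gt_even (q₀ := 2*(n:ℤ)+4) ⟨(n:ℤ)+2, by ring⟩ ?_ ?_ hle
  · show sgl ((GameN n).p (false, n)) _ + 0 < sgl ((GameN n).p (false, n)) _ +
      (sgl ((GameN n).p (false, n+1)) _ + 0)
    rw [pD_n hn, pD_top]
    simp only [sgl]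
    split_ifs <;> omega
  · intro r hr
    show sgl ((GameN n).p (false, n)) r + (sgl ((GameN n).p (false, n+1)) r + 0)
      = sgl ((GameN n).p (false, n)) r + 0
    rw [pD_n hn, pD_top]
    simp only [sgl]
    split_ifs <;> omega

/-- Any visit to `d_{n+1}` under an optimal counterstrategy forces `σ(a_n) = d_{n+1}`. -/
lemma hit_forces {n : ℕ} (hn : 1 ≤ n) {σ τbar : VN → VN}
    (hσ : (GameN n).Strat0Valid σ)
    (hopt : OptCounter1 (GameN n) (true, n+1) σ τbar)
    {v : VN} (hv : v.1 = true) {m : ℕ}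
    (hm : (GameN n).play σ τbar v m = (false, n+1)) :
    σ (true, n) = (false, n+1) := by
  classical
  have hτbv := hopt.1
  have hex : ∃ m, (GameN n).play σ τbar v m = (false, n+1) := ⟨m, hm⟩
  have hm0 := Nat.find_spec hex
  have hm0pos : Nat.find hex ≠ 0 := by
    intro h0
    rw [h0] at hm0
    rcases v with ⟨bb, i⟩
    change bb = true at hv
    subst hv
    exact absurd hm0 (by simp [PGame.play])
  obtain ⟨m1, hm1⟩ := Nat.exists_eq_succ_of_ne_zero hm0pos
  have hstep : (GameN n).step σ τbar ((GameN n).play σ τbar v m1) = (false, n+1) := by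
    have hm0' := hm0
    rw [hm1] at hm0'
    rw [← play_succ']
    exact hm0'
  rcases hx : (GameN n).play σ τbar v m1 with ⟨cc, k⟩
  rw [hx] at hstep
  cases cc
  · rw [stepD] at hstep
    by_cases hk : 1 ≤ k ∧ k ≤ n
    · rcases tau_opts hτbv hk.1 hk.2 with hc | hc | ⟨_, hc⟩
      · rw [hc] at hstep
        exact absurd hstep (by simp)
      · rw [hc] at hstep
        have hkn : k = n := by
          injection hstep with h1 h2
          omega
        subst hkn
        exact absurd hc (opt_no_dtop hn hσ hopt)
      · rw [hc] at hstep
        injection hstep with h1 h2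
        omega
    · rw [tau_forced hτbv hk] at hstep
      exact absurd hstep (by simp)
  · rw [stepA] at hstep
    by_cases hk : 1 ≤ k ∧ k ≤ n
    · rcases sigma_opts hσ hk.1 hk.2 with hc | hc | ⟨_, hc⟩
      · rw [hc] at hstep
        exact absurd hstep (by simp)
      · rw [hc] at hstep
        have hkn : k = n := by
          injection hstep with h1 h2
          omega
        subst hkn
        exact hc
      · rw [hc] at hstep
        injection hstep with h1 h2
        omega
    · rw [sigma_forced hσ hn hk] at hstep
      exact absurd hstep (by simp)

end FinalAssembly
section CaseB

lemma caseB_contra {n : ℕ} (hn : 1 ≤ n) {σ τbar : VN → VN}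
    (hσ : (GameN n).Strat0Valid σ)
    (hopt : OptCounter1 (GameN n) (true, n+1) σ τbar)
    {b : ℕ} (hb1 : 1 ≤ b) (hb2 : b < n)
    (hpre : ∀ i, 1 ≤ i → i < b → σ (true, i) = (true, i+1))
    (hexit : σ (true, b) = (false, b+1))
    {m : ℕ} (hm : (GameN n).play σ τbar (true, 1) m = (false, n+1)) : False := by
  classical
  have hτbv := hopt.1
  have hchain : ∀ t, t ≤ b - 1 → (GameN n).play σ τbar (true, 1) t = (true, t+1) := by
    intro t
    induction t with
    | zero => intro _; rfl
    | succ k ih =>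
      intro hk
      rw [play_succ', ih (by omega), stepA]
      exact hpre (k+1) (by omega) (by omega)
  have hpb : (GameN n).play σ τbar (true, 1) b = (false, b+1) := by
    have h1 : (GameN n).play σ τbar (true, 1) ((b-1)+1) = (false, b+1) := by
      rw [play_succ', hchain (b-1) (le_refl _), stepA]
      rw [show b - 1 + 1 = b from by omega, hexit]
    rw [show (b-1)+1 = b from by omega] at h1
    exact h1
  have hsh : ∀ t, (GameN n).play σ τbar (false, b+1) t
      = (GameN n).play σ τbar (true, 1) (b + t) := by
    intro t
    rw [show b + t = t + b from by omega, play_add, hpb]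
  have hmb : b < m := by
    by_contra hle
    push_neg at hle
    rcases Nat.lt_or_ge m b with h | h
    · have hh := hchain m (by omega)
      rw [hh] at hm
      exact absurd hm (by simp)
    · have he : m = b := by omega
      rw [he, hpb] at hm
      injection hm with h1 h2
      omega
  have hhit : (GameN n).play σ τbar (false, b+1) (m - b) = (false, n+1) := by
    rw [hsh, show b + (m-b) = m from by omega]
    exact hm
  have hreach : ∃ t, (GameN n).play σ τbar (false, b+1) t = (true, n+1) := by
    refine ⟨m - b + 1, ?_⟩
    rw [play_succ', hhit, stepD]
    exact tau_forced hτbv (by omega)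
  have hv1 := theta_reach_eq hreach
  have ht0 : m - b < Nat.find hreach := by
    by_contra hge
    push_neg at hge
    have hvtop : (GameN n).play σ τbar (false, b+1) (m - b) = (true, n+1) := by
      rw [show m - b = (m - b - Nat.find hreach) + Nat.find hreach from by omega, play_add,
        Nat.find_spec hreach]
      exact play_top_fix (GameN n) (true, n+1) σ τbar (step_top hσ) _
    rw [hhit] at hvtop
    exact absurd hvtop (by simp)
  have hchainc : ∀ t, t ≤ n - (b+1) →
      (GameN n).play σ (tchain n) (false, b+1) t = (false, b+1+t) := by
    intro t
    induction t with
    | zero => intro _; rfl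
    | succ k ih =>
      intro hk
      rw [play_succ', ih (by omega), stepD, tchain_D, if_pos ⟨by omega, by omega⟩]
      exact congrArg (fun z => ((false, z) : VN)) (by omega)
  have hplaytop : (GameN n).play σ (tchain n) (false, b+1) (n - (b+1) + 1) = (true, n+1) := by
    rw [play_succ', hchainc (n-(b+1)) (le_refl _), stepD, tchain_D, if_neg (by omega)]
  have hreach' : ∃ t, (GameN n).play σ (tchain n) (false, b+1) t = (true, n+1) :=
    ⟨n - (b+1) + 1, hplaytop⟩
  have hv2 := theta_reach_eq hreach'
  have hnv : ∀ t, (GameN n).play σ (tchain n) (false, b+1) t ≠ (false, n+1) := by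
    intro t
    rcases le_or_gt t (n - (b+1)) with h | h
    · rw [hchainc t h]
      intro hc
      injection hc with h1 h2
      omega
    · have hh : (GameN n).play σ (tchain n) (false, b+1) t = (true, n+1) := by
        rw [show t = (t - (n-(b+1)+1)) + (n-(b+1)+1) from by omega, play_add, hplaytop]
        exact play_top_fix (GameN n) (true, n+1) σ (tchain n) (step_top hσ) _
      rw [hh]
      simp
  have hle := hopt.2 (tchain n) (tchain_valid hn) (false, b+1)
  rw [hv1, hv2] at hle
  refine not_ele_of_gt_even (q₀ := 2*(n:ℤ)+4) ⟨(n:ℤ)+2, by ring⟩ ?_ ?_ hle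
  · show ((Finset.range (Nat.find hreach')).filter _).card <
      ((Finset.range (Nat.find hreach)).filter _).card
    have hc0 : ((Finset.range (Nat.find hreach')).filter
        (fun j => (GameN n).p ((GameN n).play σ (tchain n) (false, b+1) j)
          = 2*(n:ℤ)+4)).card = 0 := by
      rw [Finset.card_eq_zero, Finset.filter_eq_empty_iff]
      intro j _
      intro hq
      rcases hxx : (GameN n).play σ (tchain n) (false, b+1) j with ⟨cc, i⟩
      rw [hxx, pG] at hq
      cases cc
      · by_cases hi : 1 ≤ i ∧ i ≤ n + 1
        · rw [pD hi.1 hi.2] at hq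
          have : i = n + 1 := by omega
          subst this
          exact hnv j (by rw [hxx])
        · rw [show pN n (false, i) = 1 from by simp only [pN]; rw [if_neg hi]] at hq
          omega
      · by_cases hi : 1 ≤ i ∧ i ≤ n
        · rw [pA hi.1 hi.2] at hq
          omega
        · rw [show pN n (true, i) = 1 from by simp only [pN]; rw [if_neg hi]] at hq
          omega
    have hcpos : 0 < ((Finset.range (Nat.find hreach)).filter
        (fun j => (GameN n).p ((GameN n).play σ τbar (false, b+1) j)
          = 2*(n:ℤ)+4)).card := by
      refine Finset.card_pos.mpr ⟨m - b, Finset.mem_filter.mpr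
        ⟨Finset.mem_range.mpr ht0, ?_⟩⟩
      rw [hhit]
      exact pD_top
    omega
  · intro r hr
    have h1 := theta_fin_support hv1 r (Or.inr hr)
    have h2 := theta_fin_support hv2 r (Or.inr hr)
    rw [h1, h2]

end CaseB

/-- In `G_n`, the unique player 0 strategy for which the play from every starting node
`a_i` under `σ` and any optimal player 1 response passes through `d_{n+1}` is
`σ*` (with `σ*(a_i) = a_{i+1}` for `i < n` and `σ*(a_n) = d_{n+1}`); it differs from the
initial strategy `σ₀` in exactly one edge (at `a_n`). -/
theorem stmt11 (n : ℕ) (hn : 1 ≤ n) :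
    (∀ σ : VN → VN, (GameN n).Strat0Valid σ →
      ((∀ σbar, OptCounter1 (GameN n) (true, n + 1) σ σbar →
          ∀ i : ℕ, 1 ≤ i → i ≤ n →
            ∃ m, (GameN n).play σ σbar (true, i) m = (false, n + 1)) ↔
        (∀ v : VN, v.1 = true → σ v = sigmaStar n v))) ∧
    {v : VN | v.1 = true ∧ sigmaStar n v ≠ sigma0 n v} = {(true, n)} := by
  constructor
  · intro σ hσ
    constructor
    · intro hL v hv
      rcases v with ⟨bb, i⟩
      change bb = true at hv
      subst hv
      obtain ⟨τbar, hopt⟩ := opt_exists hn hσ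
      by_cases hi : 1 ≤ i ∧ i ≤ n
      · obtain ⟨m, hm⟩ := hL τbar hopt 1 (le_refl 1) hn
        have hσn : σ (true, n) = (false, n+1) :=
          hit_forces hn hσ hopt (v := (true, 1)) rfl hm
        by_cases hin : i = n
        · subst hin
          rw [hσn]
          simp only [sigmaStar]
          rw [if_neg (by omega), if_pos True.intro]
        · have hadv : ∀ j, 1 ≤ j → j < n → σ (true, j) = (true, j+1) := by
            by_contra hcon
            push_neg at hcon
            obtain ⟨j0, hj0a, hj0b, hj0c⟩ := hcon
            have hex : ∃ j, 1 ≤ j ∧ j < n ∧ σ (true, j) ≠ (true, j+1) :=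
              ⟨j0, hj0a, hj0b, hj0c⟩
            classical
            obtain ⟨hb1', hb2', hb3'⟩ := Nat.find_spec hex
            set b := Nat.find hex with hbdef
            have hpre : ∀ i', 1 ≤ i' → i' < b → σ (true, i') = (true, i'+1) := by
              intro i' h1 h2
              by_contra hcc
              exact absurd ⟨h1, by omega, hcc⟩ (Nat.find_min hex h2)
            rcases sigma_opts hσ hb1' (by omega) with hc | hc | ⟨h2b, hc⟩
            · exact hb3' hc
            · obtain ⟨m', hm'⟩ := hL τbar hopt 1 (le_refl 1) hn
              exact caseB_contra hn hσ hopt hb1' hb2' hpre hc hm'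
            · have hmem : ∀ t, ∃ j, 1 ≤ j ∧ j ≤ b ∧
                  (GameN n).play σ τbar (true, 1) t = (true, j) := by
                intro t
                induction t with
                | zero => exact ⟨1, le_refl 1, hb1', rfl⟩
                | succ s ih =>
                  obtain ⟨j, hj1, hj2, hjp⟩ := ih
                  rw [play_succ', hjp, stepA]
                  by_cases hjb : j < b
                  · rw [hpre j hj1 hjb]
                    exact ⟨j+1, by omega, by omega, rfl⟩
                  · have hjb' : j = b := by omega
                    rw [hjb', hc]
                    exact ⟨1, le_refl 1, hb1', rfl⟩
              obtain ⟨m', hm'⟩ := hL τbar hopt 1 (le_refl 1) hn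
              obtain ⟨j, _, _, hjp⟩ := hmem m'
              rw [hjp] at hm'
              exact absurd hm' (by simp)
          rw [hadv i hi.1 (by omega)]
          simp only [sigmaStar]
          rw [if_pos ⟨hi.1, by omega⟩]
      · rw [sigma_forced hσ hn hi]
        simp only [sigmaStar]
        rw [if_neg (by omega), if_neg (by omega)]
    · intro hR σbar hopt i h1i hin
      have hplay : ∀ t, t ≤ n - i → (GameN n).play σ σbar (true, i) t = (true, i+t) := by
        intro t
        induction t with
        | zero => intro _; rfl
        | succ s ih =>
          intro hs
          rw [play_succ', ih (by omega), stepA, hR (true, i+s) rfl]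
          simp only [sigmaStar]
          rw [if_pos ⟨by omega, by omega⟩]
          exact congrArg (fun z => ((true, z) : VN)) (by omega)
      refine ⟨n - i + 1, ?_⟩
      rw [play_succ', hplay (n-i) (le_refl _), stepA, hR (true, i+(n-i)) rfl]
      rw [show i + (n-i) = n from by omega]
      simp only [sigmaStar]
      rw [if_neg (by omega), if_pos True.intro]
  · ext ⟨bb, i⟩
    simp only [Set.mem_setOf_eq, Set.mem_singleton_iff]
    constructor
    · rintro ⟨h1, h2⟩
      change bb = true at h1
      subst h1
      by_contra hne
      apply h2
      have hin : i ≠ n := by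
        intro h
        exact hne (by rw [h])
      by_cases hc : 1 ≤ i ∧ i < n
      · simp only [sigmaStar, sigma0]
        rw [if_pos hc, if_pos ⟨hc.1, by omega⟩]
      · simp only [sigmaStar, sigma0]
        rw [if_neg hc, if_neg hin, if_neg (by omega)]
    · intro h
      injection h with h1 h2
      subst h1
      subst h2
      refine ⟨rfl, ?_⟩
      simp only [sigmaStar, sigma0]
      rw [if_neg (by omega), if_pos True.intro, if_pos ⟨by omega, by omega⟩]
      simp
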